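/- arXiv:0807.1079 — 5 statements merged into one kernel-verified Lean document; each statement's English description precedes it below -/
import Mathlib

section
/- Let r > 0 be a real number. Let Z be a set of homeomorphisms of [0, r) onto itself (with respect to the usual topology) such that: (i) z(α) ≥ α for every z ∈ Z and every α ∈ [0, r); (ii) for every z ∈ Z, the support supp(z) is an interval; and (iii) the union ⋃_{z∈Z} supp(z) is dense in (0, r). Let f be a bijection of [0, r) onto itself such that f commutes with every element of Z (f ∘ z = z ∘ f for all z ∈ Z), f is right-continuous at every point of [0, r), and f has only finitely many points of discontinuity. Then f is continuous on all of [0, r). -/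
open Set Filter Topology

/-- The support of `z` inside `[0, r)`. -/
def suppSet (r : ℝ) (z : ℝ → ℝ) : Set ℝ := {t ∈ Set.Ico 0 r | z t ≠ t}

lemma supp_lt (r : ℝ) (z : ℝ → ℝ)
    (hzb : Set.BijOn z (Set.Ico 0 r) (Set.Ico 0 r))
    (hge : ∀ α ∈ Set.Ico 0 r, α ≤ z α)
    {t : ℝ} (ht : t ∈ suppSet r z) : t < z t ∧ z t ∈ suppSet r z := by
  have h1 : t < z t := lt_of_le_of_ne (hge t ht.1) (Ne.symm ht.2)
  have h2 : z t ∈ Set.Ico 0 r := hzb.mapsTo ht.1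
  exact ⟨h1, h2, fun he => ht.2 (hzb.injOn h2 ht.1 he)⟩

lemma bijOn_supp (r : ℝ) (z f : ℝ → ℝ)
    (hzb : Set.BijOn z (Set.Ico 0 r) (Set.Ico 0 r))
    (hfb : Set.BijOn f (Set.Ico 0 r) (Set.Ico 0 r))
    (hc : ∀ t ∈ Set.Ico 0 r, f (z t) = z (f t)) :
    Set.BijOn f (suppSet r z) (suppSet r z) := by
  have hsub : suppSet r z ⊆ Set.Ico 0 r := fun t ht => ht.1
  refine ⟨?_, hfb.injOn.mono hsub, ?_⟩
  · intro t ht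
    refine ⟨hfb.mapsTo ht.1, ?_⟩
    rw [← hc t ht.1]
    intro he
    exact ht.2 (hfb.injOn (hzb.mapsTo ht.1) ht.1 he)
  · intro u hu
    obtain ⟨t, htI, hft⟩ := hfb.surjOn hu.1
    refine ⟨t, ⟨htI, fun he => hu.2 ?_⟩, hft⟩
    rw [← hft, ← hc t htI, he]

lemma step_cont (r : ℝ) (z w f : ℝ → ℝ)
    (hzb : Set.BijOn z (Set.Ico 0 r) (Set.Ico 0 r))
    (hzc : ContinuousOn z (Set.Ico 0 r))
    (hw : Set.InvOn w z (Set.Ico 0 r) (Set.Ico 0 r))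
    (hwc : ContinuousOn w (Set.Ico 0 r))
    (hfb : Set.BijOn f (Set.Ico 0 r) (Set.Ico 0 r))
    (hc : ∀ t ∈ Set.Ico 0 r, f (z t) = z (f t))
    (t : ℝ) (ht : t ∈ Set.Ico 0 r)
    (h : ContinuousWithinAt f (Set.Ico 0 r) (z t)) :
    ContinuousWithinAt f (Set.Ico 0 r) t := by
  have hmap : Set.MapsTo (f ∘ z) (Set.Ico 0 r) (Set.Ico 0 r) :=
    fun s hs => hfb.mapsTo (hzb.mapsTo hs)
  have h1 : ContinuousWithinAt (f ∘ z) (Set.Ico 0 r) t :=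
    h.comp (hzc t ht) hzb.mapsTo
  have h2 : ContinuousWithinAt (w ∘ (f ∘ z)) (Set.Ico 0 r) t :=
    (hwc _ (hmap ht)).comp h1 hmap
  have key : ∀ s ∈ Set.Ico 0 r, f s = (w ∘ (f ∘ z)) s := by
    intro s hs
    show f s = w (f (z s))
    rw [hc s hs, hw.1 (hfb.mapsTo hs)]
  exact h2.congr key (key t ht)

lemma cont_on_supp (r : ℝ) (z w f : ℝ → ℝ)
    (hzb : Set.BijOn z (Set.Ico 0 r) (Set.Ico 0 r))
    (hzc : ContinuousOn z (Set.Ico 0 r))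
    (hw : Set.InvOn w z (Set.Ico 0 r) (Set.Ico 0 r))
    (hwc : ContinuousOn w (Set.Ico 0 r))
    (hge : ∀ α ∈ Set.Ico 0 r, α ≤ z α)
    (hfb : Set.BijOn f (Set.Ico 0 r) (Set.Ico 0 r))
    (hc : ∀ t ∈ Set.Ico 0 r, f (z t) = z (f t))
    (hfin : {x ∈ Set.Ico 0 r | ¬ ContinuousWithinAt f (Set.Ico 0 r) x}.Finite)
    {t0 : ℝ} (ht0 : t0 ∈ suppSet r z) :
    ContinuousWithinAt f (Set.Ico 0 r) t0 := by
  by_contra hd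
  have key : ∀ n : ℕ, z^[n] t0 ∈ suppSet r z ∧
      ¬ ContinuousWithinAt f (Set.Ico 0 r) (z^[n] t0) := by
    intro n
    induction n with
    | zero => exact ⟨ht0, hd⟩
    | succ n ih =>
      rw [Function.iterate_succ_apply']
      exact ⟨(supp_lt r z hzb hge ih.1).2,
        fun hcz => ih.2 (step_cont r z w f hzb hzc hw hwc hfb hc _ ih.1.1 hcz)⟩
  have hmono : StrictMono (fun n => z^[n] t0) := by
    apply strictMono_nat_of_lt_succ
    intro n
    show z^[n] t0 < z^[n+1] t0
    rw [Function.iterate_succ_apply']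
    exact (supp_lt r z hzb hge (key n).1).1
  have hsub : Set.range (fun n => z^[n] t0) ⊆
      {x ∈ Set.Ico 0 r | ¬ ContinuousWithinAt f (Set.Ico 0 r) x} := by
    rintro _ ⟨n, rfl⟩
    exact ⟨(key n).1.1, (key n).2⟩
  exact (hfin.subset hsub).not_infinite (Set.infinite_range_of_injective hmono.injective)

lemma mono_pair (r : ℝ) (z f : ℝ → ℝ)
    (hzb : Set.BijOn z (Set.Ico 0 r) (Set.Ico 0 r))
    (hge : ∀ α ∈ Set.Ico 0 r, α ≤ z α)
    (hsupp : Set.OrdConnected (suppSet r z))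
    (hfb : Set.BijOn f (Set.Ico 0 r) (Set.Ico 0 r))
    (hc : ∀ t ∈ Set.Ico 0 r, f (z t) = z (f t))
    (hcont : ∀ t ∈ suppSet r z, ContinuousWithinAt f (Set.Ico 0 r) t)
    {u v : ℝ} (hu : u ∈ suppSet r z) (hv : v ∈ suppSet r z) (huv : u < v) :
    f u < f v := by
  have hfS : Set.BijOn f (suppSet r z) (suppSet r z) := bijOn_supp r z f hzb hfb hc
  obtain ⟨a, haI, hav⟩ := hzb.surjOn hv.1
  have hane : z a ≠ a := by
    rw [hav]
    rintro rfl
    exact hv.2 hav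
  have haS : a ∈ suppSet r z := ⟨haI, hane⟩
  have hav' : a < v := by
    have h1 : a ≤ v := by rw [← hav]; exact hge a haI
    rcases h1.lt_or_eq with h | h
    · exact h
    · exact absurd (h ▸ hav) (h ▸ hane)
  have hmS : min u a ∈ suppSet r z := by
    rcases le_total u a with h | h
    · rwa [min_eq_left h]
    · rwa [min_eq_right h]
  have hT : Set.Icc (min u a) v ⊆ suppSet r z := hsupp.out hmS hv
  have hsubI : Set.Icc (min u a) v ⊆ Set.Ico 0 r := fun s hs => (hT hs).1
  have hcT : ContinuousOn f (Set.Icc (min u a) v) :=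
    fun t ht => (hcont t (hT ht)).mono hsubI
  have hinjT : Set.InjOn f (Set.Icc (min u a) v) := hfb.injOn.mono hsubI
  have hmv : min u a ≤ v := le_trans (min_le_right u a) hav'.le
  rcases ContinuousOn.strictMonoOn_of_injOn_Icc' hmv hcT hinjT with hmono | hanti
  · exact hmono ⟨min_le_left u a, huv.le⟩ ⟨hmv, le_rfl⟩ huv
  · exfalso
    have h1 : f v < f a := hanti ⟨min_le_right u a, hav'.le⟩ ⟨hmv, le_rfl⟩ hav'
    have hfaS : f a ∈ suppSet r z := hfS.mapsTo haS
    have h2 : f a < z (f a) := lt_of_le_of_ne (hge _ hfaS.1) (Ne.symm hfaS.2)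
    rw [← hc a haI, hav] at h2
    exact absurd h2 (not_lt.mpr h1.le)


/-- Let `r > 0`.  Let `Z` be a set of homeomorphisms of `[0, r)` onto itself
(with respect to the usual topology) such that: (i) `z α ≥ α` for every `z ∈ Z` and every
`α ∈ [0, r)`; (ii) for every `z ∈ Z`, the support `supp z = {t ∈ [0,r) | z t ≠ t}` is an
interval; (iii) the union of the supports is dense in `(0, r)`.  Let `f` be a bijection of
`[0, r)` onto itself which commutes with every element of `Z`, is right-continuous at every
point of `[0, r)`, and has only finitely many points of discontinuity.  Then `f` is
continuous on all of `[0, r)`. -/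
theorem continuousOn_of_commutes_with_dense_family
    (r : ℝ) (hr : 0 < r) (Z : Set (ℝ → ℝ))
    (hZbij : ∀ z ∈ Z, Set.BijOn z (Set.Ico 0 r) (Set.Ico 0 r))
    (hZcont : ∀ z ∈ Z, ContinuousOn z (Set.Ico 0 r))
    (hZinv : ∀ z ∈ Z, ∃ w : ℝ → ℝ,
      Set.InvOn w z (Set.Ico 0 r) (Set.Ico 0 r) ∧ ContinuousOn w (Set.Ico 0 r))
    (hZge : ∀ z ∈ Z, ∀ α ∈ Set.Ico 0 r, α ≤ z α)
    (hZsupp : ∀ z ∈ Z, Set.OrdConnected {t ∈ Set.Ico 0 r | z t ≠ t})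
    (hZdense : Set.Ioo 0 r ⊆ closure (⋃ z ∈ Z, {t ∈ Set.Ico 0 r | z t ≠ t}))
    (f : ℝ → ℝ) (hf : Set.BijOn f (Set.Ico 0 r) (Set.Ico 0 r))
    (hcomm : ∀ z ∈ Z, ∀ t ∈ Set.Ico 0 r, f (z t) = z (f t))
    (hrc : ∀ x ∈ Set.Ico 0 r, ContinuousWithinAt f (Set.Ico x r) x)
    (hfin : {x ∈ Set.Ico 0 r | ¬ ContinuousWithinAt f (Set.Ico 0 r) x}.Finite) :
    ContinuousOn f (Set.Ico 0 r) := by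
  classical
  -- continuity of f at every point of every support
  have hcontS : ∀ z ∈ Z, ∀ t ∈ suppSet r z, ContinuousWithinAt f (Set.Ico 0 r) t := by
    intro z hz t ht
    obtain ⟨w, hw, hwc⟩ := hZinv z hz
    exact cont_on_supp r z w f (hZbij z hz) (hZcont z hz) hw hwc (hZge z hz) hf
      (hcomm z hz) hfin ht
  -- f is strictly increasing on each support
  have hM : ∀ z ∈ Z, ∀ u ∈ suppSet r z, ∀ v ∈ suppSet r z, u < v → f u < f v := by
    intro z hz u hu v hv huv
    exact mono_pair r z f (hZbij z hz) (hZge z hz) (hZsupp z hz) hf (hcomm z hz)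
      (hcontS z hz) hu hv huv
  have hfS : ∀ z ∈ Z, Set.BijOn f (suppSet r z) (suppSet r z) :=
    fun z hz => bijOn_supp r z f (hZbij z hz) hf (hcomm z hz)
  -- density extraction
  have hnear : ∀ y ∈ Set.Ioo 0 r, ∀ η > 0, ∃ z ∈ Z, ∃ α ∈ suppSet r z, |α - y| < η := by
    intro y hy η hη
    have hyc : y ∈ closure (⋃ z ∈ Z, suppSet r z) := hZdense hy
    rw [Metric.mem_closure_iff] at hyc
    obtain ⟨b, hb, hdist⟩ := hyc η hη
    simp only [Set.mem_iUnion] at hb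
    obtain ⟨z, hz, hbS⟩ := hb
    refine ⟨z, hz, b, hbS, ?_⟩
    rw [Real.dist_eq] at hdist
    rwa [abs_sub_comm]
  -- supports avoiding x lie on one side of x
  have hsideL : ∀ z ∈ Z, ∀ x, x ∉ suppSet r z → ∀ α ∈ suppSet r z, α < x →
      ∀ u ∈ suppSet r z, u < x := by
    intro z hz x hxS α hα hαx u hu
    by_contra h
    push_neg at h
    exact hxS ((hZsupp z hz).out hα hu ⟨hαx.le, h⟩)
  have hsideR : ∀ z ∈ Z, ∀ x, x ∉ suppSet r z → ∀ α ∈ suppSet r z, x < α →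
      ∀ u ∈ suppSet r z, x < u := by
    intro z hz x hxS α hα hαx u hu
    by_contra h
    push_neg at h
    exact hxS ((hZsupp z hz).out hu hα ⟨h, hαx.le⟩)
  -- right approach
  have hApR : ∀ x ∈ Set.Ioo 0 r, (∀ z ∈ Z, x ∉ suppSet r z) → ∀ ε > 0,
      ∃ s ∈ Set.Ico 0 r, x < s ∧ s < x + ε ∧ x < f s ∧ f s < x + ε := by
    intro x hx hxU ε hε
    have hc0 : 0 < min ε (r - x) := lt_min hε (by linarith [hx.2])
    obtain ⟨z, hz, α, hαS, hαy⟩ := hnear (x + min ε (r - x) / 2)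
      ⟨by linarith [hx.1], by linarith [min_le_right ε (r - x)]⟩
      (min ε (r - x) / 2) (by linarith)
    rw [abs_lt] at hαy
    have hα1 : x < α := by linarith [hαy.1]
    have hα2 : α < x + ε := by linarith [hαy.2, min_le_left ε (r - x)]
    have hside := hsideR z hz x (hxU z hz) α hαS hα1
    obtain ⟨s₂, hs₂S, hfs₂⟩ := (hfS z hz).surjOn hαS
    rcases le_or_gt s₂ α with h | h
    · exact ⟨s₂, hs₂S.1, hside s₂ hs₂S, lt_of_le_of_lt h hα2,
        by rw [hfs₂]; exact hα1, by rw [hfs₂]; exact hα2⟩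
    · have hfα : f α < f s₂ := hM z hz α hαS s₂ hs₂S h
      rw [hfs₂] at hfα
      exact ⟨α, hαS.1, hα1, hα2, hside (f α) ((hfS z hz).mapsTo hαS),
        lt_trans hfα hα2⟩
  -- left approach
  have hApL : ∀ x ∈ Set.Ioo 0 r, (∀ z ∈ Z, x ∉ suppSet r z) → ∀ ε > 0,
      ∃ s ∈ Set.Ico 0 r, x - ε < s ∧ s < x ∧ x - ε < f s ∧ f s < x := by
    intro x hx hxU ε hε
    have hc0 : 0 < min ε x := lt_min hε hx.1
    obtain ⟨z, hz, α, hαS, hαy⟩ := hnear (x - min ε x / 2)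
      ⟨by linarith [min_le_right ε x], by linarith [hx.2]⟩
      (min ε x / 2) (by linarith)
    rw [abs_lt] at hαy
    have hα1 : α < x := by linarith [hαy.2]
    have hα2 : x - ε < α := by linarith [hαy.1, min_le_left ε x]
    have hside := hsideL z hz x (hxU z hz) α hαS hα1
    obtain ⟨s₂, hs₂S, hfs₂⟩ := (hfS z hz).surjOn hαS
    rcases le_or_gt α s₂ with h | h
    · exact ⟨s₂, hs₂S.1, lt_of_lt_of_le hα2 h, hside s₂ hs₂S,
        by rw [hfs₂]; exact hα2, by rw [hfs₂]; exact hα1⟩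
    · have hfα : f s₂ < f α := hM z hz s₂ hs₂S α hαS h
      rw [hfs₂] at hfα
      exact ⟨α, hαS.1, hα2, hα1, lt_trans hα2 hfα,
        hside (f α) ((hfS z hz).mapsTo hαS)⟩
  -- fixed points outside the supports
  have hfix : ∀ x ∈ Set.Ioo 0 r, (∀ z ∈ Z, x ∉ suppSet r z) → f x = x := by
    intro x hx hxU
    have hxI : x ∈ Set.Ico 0 r := ⟨hx.1.le, hx.2⟩
    have key : ∀ ε > 0, |f x - x| < 2 * ε := by
      intro ε hε
      obtain ⟨δ, hδ0, hδ⟩ := Metric.continuousWithinAt_iff.1 (hrc x hxI) ε hε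
      obtain ⟨s, hsI, hs1, hs2, hs3, hs4⟩ := hApR x hx hxU (min ε δ) (lt_min hε hδ0)
      have h5 : dist (f s) (f x) < ε := hδ ⟨hs1.le, hsI.2⟩
        (by rw [Real.dist_eq, abs_of_pos (by linarith)]; linarith [min_le_right ε δ])
      rw [Real.dist_eq, abs_lt] at h5
      have h6l : x - ε < f s := by linarith [min_le_left ε δ]
      have h6r : f s < x + ε := by linarith [min_le_left ε δ]
      rw [abs_lt]
      constructor <;> linarith
    by_contra hne
    have h0 : 0 < |f x - x| := abs_pos.2 (sub_ne_zero.2 hne)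
    have := key (|f x - x| / 2) (by linarith)
    linarith
  -- points below such an x map below x
  have hlt : ∀ x ∈ Set.Ioo 0 r, (∀ z ∈ Z, x ∉ suppSet r z) →
      ∀ t, 0 < t → t < x → f t < x := by
    intro x hx hxU t ht0 htx
    by_cases htU : ∃ z ∈ Z, t ∈ suppSet r z
    · obtain ⟨z, hz, htS⟩ := htU
      exact hsideL z hz x (hxU z hz) t htS htx (f t) ((hfS z hz).mapsTo htS)
    · push_neg at htU
      rw [hfix t ⟨ht0, htx.trans hx.2⟩ htU]
      exact htx
  -- main goal
  intro x hxI
  by_cases hxU : ∃ z ∈ Z, x ∈ suppSet r z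
  · obtain ⟨z, hz, hxS⟩ := hxU
    exact hcontS z hz x hxS
  push_neg at hxU
  rcases eq_or_lt_of_le hxI.1 with h0 | h0
  · subst h0
    exact hrc 0 hxI
  have hx : x ∈ Set.Ioo 0 r := ⟨h0, hxI.2⟩
  have hfxx : f x = x := hfix x hx hxU
  -- find m < x with no discontinuity in (m, x)
  set E := insert (0:ℝ)
    ({y ∈ Set.Ico 0 r | ¬ ContinuousWithinAt f (Set.Ico 0 r) y} ∩ Set.Iio x) with hE
  have hEfin : E.Finite := (hfin.inter_of_left _).insert 0
  have hFne : hEfin.toFinset.Nonempty := by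
    rw [Set.Finite.toFinset_nonempty]
    exact ⟨0, Set.mem_insert _ _⟩
  set m := hEfin.toFinset.max' hFne with hm
  have hmE : m ∈ E := by
    have := hEfin.toFinset.max'_mem hFne
    rwa [Set.Finite.mem_toFinset] at this
  have hmax : ∀ e ∈ E, e ≤ m := fun e he =>
    hEfin.toFinset.le_max' e (by rwa [Set.Finite.mem_toFinset])
  have hm0 : 0 ≤ m := hmax 0 (Set.mem_insert _ _)
  have hmx : m < x := by
    rcases hmE with h | h
    · rw [← h] at h0; exact h0
    · exact h.2
  have hnd : ∀ t ∈ Set.Ioo m x, ContinuousWithinAt f (Set.Ico 0 r) t := by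
    intro t ht
    by_contra hdt
    have htD : t ∈ E := Set.mem_insert_of_mem _
      ⟨⟨⟨le_trans hm0 ht.1.le, lt_trans ht.2 hx.2⟩, hdt⟩, ht.2⟩
    linarith [hmax t htD, ht.1]
  have hsubIoo : Set.Ioo m x ⊆ Set.Ico 0 r :=
    fun t ht => ⟨le_trans hm0 ht.1.le, lt_trans ht.2 hx.2⟩
  have hcIoo : ContinuousOn f (Set.Ioo m x) := fun t ht => (hnd t ht).mono hsubIoo
  have hinjIoo : Set.InjOn f (Set.Ioo m x) := hf.injOn.mono hsubIoo
  rcases ContinuousOn.strictMonoOn_of_injOn_Ioo hmx hcIoo hinjIoo with hmono | hanti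
  · -- monotone case: prove continuity
    rw [Metric.continuousWithinAt_iff]
    intro ε hε
    obtain ⟨δ₁, hδ₁0, hδ₁⟩ := Metric.continuousWithinAt_iff.1 (hrc x hxI) ε hε
    have hε₂ : 0 < min ε (x - m) := lt_min hε (by linarith)
    obtain ⟨s, hsI, hs1, hs2, hs3, hs4⟩ := hApL x hx hxU (min ε (x - m)) hε₂
    refine ⟨min δ₁ (x - s), lt_min hδ₁0 (by linarith), ?_⟩
    intro t htI hdist
    rcases le_or_gt x t with h | h
    · exact hδ₁ ⟨h, htI.2⟩ (lt_of_lt_of_le hdist (min_le_left _ _))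
    · rw [Real.dist_eq, abs_lt] at hdist
      have hst : s < t := by linarith [min_le_right δ₁ (x - s)]
      have hsm : m < s := by linarith [min_le_right ε (x - m)]
      have hfts : f s < f t := hmono ⟨hsm, hs2⟩ ⟨lt_trans hsm hst, h⟩ hst
      have hftx : f t < x := hlt x hx hxU t (lt_of_le_of_lt hm0 (lt_trans hsm hst)) h
      rw [hfxx, Real.dist_eq, abs_lt]
      constructor <;> linarith [min_le_left ε (x - m)]
  · exfalso
    obtain ⟨z, hz, α, hαS, hαy⟩ := hnear ((m + x)/2)
      ⟨by linarith, by linarith [hx.2]⟩ ((x - m)/2) (by linarith)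
    rw [abs_lt] at hαy
    have hαm : m < α := by linarith [hαy.1]
    have hαx : α < x := by linarith [hαy.2]
    have hα0 : 0 < α := lt_of_le_of_lt hm0 hαm
    have hαr : α < r := hαx.trans hx.2
    have hzca : ContinuousAt z α := (hZcont z hz α hαS.1).continuousAt
      (Ico_mem_nhds hα0 hαr)
    have hca : ContinuousAt (fun t => z t - t) α := hzca.sub continuousAt_id
    have hpos0 : 0 < z α - α :=
      sub_pos.2 (lt_of_le_of_ne (hZge z hz α hαS.1) (Ne.symm hαS.2))
    have hev : ∀ᶠ t in nhds α, 0 < z t - t :=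
      Filter.Tendsto.eventually hca (eventually_gt_nhds hpos0)
    obtain ⟨η, hη0, hη⟩ := Metric.eventually_nhds_iff.1 hev
    have h1 : α < min (α + η/2) ((α + x)/2) := lt_min (by linarith) (by linarith)
    have h2 : min (α + η/2) ((α + x)/2) < x :=
      lt_of_le_of_lt (min_le_right _ _) (by linarith)
    have h3 : dist (min (α + η/2) ((α + x)/2)) α < η := by
      rw [Real.dist_eq, abs_of_pos (by linarith)]
      linarith [min_le_left (α + η/2) ((α + x)/2)]
    have hα'S : min (α + η/2) ((α + x)/2) ∈ suppSet r z := by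
      refine ⟨⟨by linarith, by linarith [hx.2]⟩, ?_⟩
      have hp := hη h3
      intro he
      rw [he] at hp
      linarith
    have hlt1 : f α < f (min (α + η/2) ((α + x)/2)) := hM z hz α hαS _ hα'S h1
    have hlt2 : f (min (α + η/2) ((α + x)/2)) < f α :=
      hanti ⟨hαm, hαx⟩ ⟨lt_trans hαm h1, h2⟩ h1
    linarith
end

section
/- Let r > 0 be a real number. Let z be a homeomorphism of [0, r) onto itself (with respect to the usual topology) such that z(α) > α for every α ∈ (0, r). Let f be a bijection of [0, r) onto itself such that f commutes with z (f ∘ z = z ∘ f), f is right-continuous at 0, and f has only finitely many points of discontinuity. Then f is continuous on all of [0, r). -/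
open Set

/-- Let `r > 0`.  Let `z` be a homeomorphism of `[0, r)` onto itself (with
respect to the usual topology) such that `z α > α` for every `α ∈ (0, r)`.  Let `f` be a
bijection of `[0, r)` onto itself commuting with `z`, right-continuous at `0`, and with only
finitely many points of discontinuity.  Then `f` is continuous on all of `[0, r)`. -/
theorem continuousOn_of_commutes_with_expanding_homeo
    (r : ℝ) (hr : 0 < r) (z : ℝ → ℝ)
    (hzbij : Set.BijOn z (Set.Ico 0 r) (Set.Ico 0 r))
    (hzcont : ContinuousOn z (Set.Ico 0 r))
    (hzinv : ∃ w : ℝ → ℝ,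
      Set.InvOn w z (Set.Ico 0 r) (Set.Ico 0 r) ∧ ContinuousOn w (Set.Ico 0 r))
    (hzgt : ∀ α ∈ Set.Ioo 0 r, α < z α)
    (f : ℝ → ℝ) (hf : Set.BijOn f (Set.Ico 0 r) (Set.Ico 0 r))
    (hcomm : ∀ t ∈ Set.Ico 0 r, f (z t) = z (f t))
    (hrc0 : ContinuousWithinAt f (Set.Ico 0 r) 0)
    (hfin : {x ∈ Set.Ico 0 r | ¬ ContinuousWithinAt f (Set.Ico 0 r) x}.Finite) :
    ContinuousOn f (Set.Ico 0 r) := by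
  obtain ⟨w, hw, hwcont⟩ := hzinv
  set S := Set.Ico (0:ℝ) r with hS
  set D := {x ∈ S | ¬ ContinuousWithinAt f S x} with hD
  -- w maps S into S
  have hwmaps : Set.MapsTo w S S := by
    intro s hs
    have := hzbij.surjOn hs
    obtain ⟨t, ht, rfl⟩ := this
    rw [hw.1 ht]; exact ht
  -- key step : discontinuity points are mapped to discontinuity points by z
  have key : ∀ x ∈ D, z x ∈ D := by
    rintro x ⟨hxS, hxd⟩
    refine ⟨hzbij.mapsTo hxS, fun hcont => hxd ?_⟩
    -- f = w ∘ f ∘ z on S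
    have hcomp : ContinuousWithinAt (w ∘ f ∘ z) S x := by
      refine ContinuousWithinAt.comp ?_ (ContinuousWithinAt.comp hcont
        (hzcont x hxS) hzbij.mapsTo) (hf.mapsTo.comp hzbij.mapsTo)
      exact hwcont _ (hf.mapsTo (hzbij.mapsTo hxS))
    refine hcomp.congr (fun s hs => ?_) ?_
    · show f s = w (f (z s))
      rw [hcomm s hs, hw.1 (hf.mapsTo hs)]
    · show f x = w (f (z x))
      rw [hcomm x hxS, hw.1 (hf.mapsTo hxS)]
  -- every point of D lies in (0, r)
  have hDio : ∀ x ∈ D, x ∈ Set.Ioo 0 r := by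
    rintro x ⟨hxS, hxd⟩
    refine ⟨lt_of_le_of_ne hxS.1 ?_, hxS.2⟩
    rintro rfl
    exact hxd hrc0
  -- suppose f is discontinuous at some point x ∈ S
  intro x hxS
  by_contra hxd
  have hxD : x ∈ D := ⟨hxS, hxd⟩
  -- iterate z
  have hiter : ∀ n : ℕ, z^[n] x ∈ D ∧ z^[n] x < z^[n+1] x := by
    intro n
    induction n with
    | zero =>
      refine ⟨hxD, ?_⟩
      simpa using hzgt x (hDio x hxD)
    | succ n ih =>
      have hmem : z^[n+1] x ∈ D := by
        rw [Function.iterate_succ_apply']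
        exact key _ ih.1
      refine ⟨hmem, ?_⟩
      have := hzgt _ (hDio _ hmem)
      simpa [Function.iterate_succ_apply'] using this
  have hmono : StrictMono (fun n => z^[n] x) := strictMono_nat_of_lt_succ (fun n => (hiter n).2)
  exact (Set.infinite_of_injective_forall_mem hmono.injective
    (fun n => (hiter n).1)) hfin
end

section
/- Let α, β ∈ [0, r] ∩ A with α < β, and set I = (α, β). Let x ∈ F_I(r,Λ,A) satisfy fix(x) ∩ I ∩ A = ∅. Then the map φ : F_I(r,Λ,A) → Λ sending y to its right slope y′⁺(α) at α is a group homomorphism, and the restriction of φ to the centralizer of x in F_I(r,Λ,A) is injective. The same conclusions hold for the map y ↦ y′⁻(β) sending y to its left slope at β. -/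
open Set

noncomputable section

/-- The multiplicative group of positive real numbers. -/
abbrev PosReal : Type := {x : ℝ // 0 < x}

namespace ThompsonStein

/-- The support of a permutation of `ℝ`: the set of non-fixed points. -/
def supp (f : Equiv.Perm ℝ) : Set ℝ := {t | f t ≠ t}

/-- The fixed-point set of a permutation of `ℝ`. -/
def fixSet (f : Equiv.Perm ℝ) : Set ℝ := {t | f t = t}

/-- Membership in the Stein–Thompson group `F(r, Λ, A)`, where elements of the group of
piecewise affine homeomorphisms of `[0, r)` are encoded as the permutations of `ℝ` fixing
every point outside `[0, r)`.  The conditions say: `f` fixes the complement of `[0, r)`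
(so it restricts to a bijection of `[0, r)`), it is strictly increasing and continuous on
`[0, r)`, and it is piecewise affine with respect to a finite subdivision
`0 = t 0 < t 1 < ⋯ < t n = r` whose points and their images lie in `A`, the slope of each
affine piece lying in `Λ`. -/
def MemF (r : ℝ) (Λ : Subgroup PosReal) (A : AddSubgroup ℝ) (f : Equiv.Perm ℝ) : Prop :=
  (∀ t : ℝ, t ∉ Set.Ico 0 r → f t = t) ∧
  StrictMonoOn f (Set.Ico 0 r) ∧
  ContinuousOn f (Set.Ico 0 r) ∧
  ∃ n : ℕ, ∃ t : Fin (n + 1) → ℝ,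
    StrictMono t ∧ t 0 = 0 ∧ t (Fin.last n) = r ∧
    (∀ i, t i ∈ A) ∧ (∀ i, f (t i) ∈ A) ∧
    ∀ i : Fin n, ∃ s : PosReal, s ∈ Λ ∧ ∃ c : ℝ,
      ∀ u ∈ Set.Icc (t i.castSucc) (t i.succ), f u = (s : ℝ) * u + c

/-- Membership in `F_S(r, Λ, A)`: the elements of `F(r, Λ, A)` with support contained
in `S`. -/
def MemFOn (r : ℝ) (Λ : Subgroup PosReal) (A : AddSubgroup ℝ) (S : Set ℝ)
    (f : Equiv.Perm ℝ) : Prop :=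
  MemF r Λ A f ∧ supp f ⊆ S

/-- `f` has right slope `s` at `γ`:  `f` is affine with slope `s` on some interval
`(γ, γ + ε)` to the right of `γ`. -/
def HasRightSlope (f : ℝ → ℝ) (γ s : ℝ) : Prop :=
  ∃ ε > (0 : ℝ), ∃ c : ℝ, ∀ u ∈ Set.Ioo γ (γ + ε), f u = s * u + c

/-- `f` has left slope `s` at `γ`:  `f` is affine with slope `s` on some interval
`(γ - ε, γ)` to the left of `γ`. -/
def HasLeftSlope (f : ℝ → ℝ) (γ s : ℝ) : Prop :=
  ∃ ε > (0 : ℝ), ∃ c : ℝ, ∀ u ∈ Set.Ioo (γ - ε) γ, f u = s * u + c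

end ThompsonStein

namespace ThompsonStein

private lemma affine_coeffs {s₁ c₁ s₂ c₂ u₁ u₂ : ℝ} (h₁ : s₁ * u₁ + c₁ = s₂ * u₁ + c₂)
    (h₂ : s₁ * u₂ + c₁ = s₂ * u₂ + c₂) (hne : u₁ ≠ u₂) : s₁ = s₂ ∧ c₁ = c₂ := by
  have hs : s₁ = s₂ := by
    have h3 : s₁ * (u₁ - u₂) = s₂ * (u₁ - u₂) := by linear_combination h₁ - h₂
    exact mul_right_cancel₀ (sub_ne_zero.2 hne) h3
  exact ⟨hs, by rw [hs] at h₁; linarith⟩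

lemma exists_piece_right {n : ℕ} {t : Fin (n+1) → ℝ} (ht : StrictMono t)
    {γ : ℝ} (h0 : t 0 ≤ γ) (hlast : γ < t (Fin.last n)) :
    ∃ i : Fin n, t i.castSucc ≤ γ ∧ γ < t i.succ := by
  classical
  have hne : (Finset.univ.filter (fun i : Fin (n+1) => t i ≤ γ)).Nonempty :=
    ⟨0, by simp [h0]⟩
  set j := Finset.max' _ hne with hj
  have hjmem := Finset.max'_mem _ hne
  have hjle : t j ≤ γ := (Finset.mem_filter.1 hjmem).2
  have hjlt : (j : ℕ) < n := by
    rcases lt_or_eq_of_le (Nat.lt_succ_iff.1 j.isLt) with h | h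
    · exact h
    · exfalso
      have hje : j = Fin.last n := Fin.ext h
      rw [hje] at hjle; linarith
  refine ⟨⟨(j : ℕ), hjlt⟩, ?_, ?_⟩
  · have hcs : (⟨(j : ℕ), hjlt⟩ : Fin n).castSucc = j := by
      apply Fin.ext; simp
    rw [hcs]; exact hjle
  · by_contra h
    push_neg at h
    have hmem : (⟨(j : ℕ), hjlt⟩ : Fin n).succ ∈
        Finset.univ.filter (fun i : Fin (n+1) => t i ≤ γ) := by
      simp only [Finset.mem_filter, Finset.mem_univ, true_and]; exact h
    have hle := Finset.le_max' _ _ hmem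
    rw [← hj] at hle
    have hlt : j < (⟨(j : ℕ), hjlt⟩ : Fin n).succ := by
      simp [Fin.lt_def]
    exact absurd (lt_of_lt_of_le hlt hle) (lt_irrefl _)

lemma exists_piece_left {n : ℕ} {t : Fin (n+1) → ℝ} (ht : StrictMono t)
    {γ : ℝ} (h0 : t 0 < γ) (hlast : γ ≤ t (Fin.last n)) :
    ∃ i : Fin n, t i.castSucc < γ ∧ γ ≤ t i.succ := by
  classical
  have hne : (Finset.univ.filter (fun i : Fin (n+1) => γ ≤ t i)).Nonempty :=
    ⟨Fin.last n, by simp [hlast]⟩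
  set j := Finset.min' _ hne with hj
  have hjmem := Finset.min'_mem _ hne
  have hjle : γ ≤ t j := (Finset.mem_filter.1 hjmem).2
  have hjpos : 0 < (j : ℕ) := by
    rcases Nat.eq_zero_or_pos (j : ℕ) with h | h
    · exfalso
      have hje : j = 0 := Fin.ext h
      rw [hje] at hjle; linarith
    · exact h
  have hjlt : (j : ℕ) - 1 < n := by omega
  refine ⟨⟨(j : ℕ) - 1, hjlt⟩, ?_, ?_⟩
  · by_contra h
    push_neg at h
    have hmem : (⟨(j : ℕ) - 1, hjlt⟩ : Fin n).castSucc ∈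
        Finset.univ.filter (fun i : Fin (n+1) => γ ≤ t i) := by
      simp only [Finset.mem_filter, Finset.mem_univ, true_and]; exact h
    have hle := Finset.min'_le _ _ hmem
    rw [← hj] at hle
    have hlt : (⟨(j : ℕ) - 1, hjlt⟩ : Fin n).castSucc < j := by
      rw [Fin.lt_def]; show (j : ℕ) - 1 < (j : ℕ); omega
    exact absurd (lt_of_le_of_lt hle hlt) (lt_irrefl _)
  · have hs : (⟨(j : ℕ) - 1, hjlt⟩ : Fin n).succ = j := by
      apply Fin.ext; simp; omega
    rw [hs]; exact hjle


lemma fix_outside {r : ℝ} {Λ : Subgroup PosReal} {A : AddSubgroup ℝ} {α β : ℝ}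
    {y : Equiv.Perm ℝ} (hy : MemFOn r Λ A (Set.Ioo α β) y)
    {u : ℝ} (hu : u ∉ Set.Ioo α β) : y u = u := by
  by_contra h
  exact hu (hy.2 h)

lemma right_normal {r : ℝ} {Λ : Subgroup PosReal} {A : AddSubgroup ℝ} {α β : ℝ}
    (h0 : 0 ≤ α) (hαβ : α < β) (hβr : β ≤ r)
    {y : Equiv.Perm ℝ} (hy : MemFOn r Λ A (Set.Ioo α β) y) :
    ∃ s : PosReal, s ∈ Λ ∧ ∃ ε : ℝ, 0 < ε ∧
      ∀ u ∈ Set.Ioo α (α + ε), y u = (s : ℝ) * u + (α - (s : ℝ) * α) := by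
  obtain ⟨⟨hout, hmono, hcont, n, t, htm, ht0, htl, htA, htfA, haff⟩, hsupp⟩ := hy
  have hyα : y α = α := by
    by_contra h
    exact absurd (hsupp h).1 (lt_irrefl α)
  have hαr : α < r := lt_of_lt_of_le hαβ hβr
  obtain ⟨i, hi1, hi2⟩ := exists_piece_right (γ := α) htm (by rw [ht0]; exact h0) (by rw [htl]; exact hαr)
  obtain ⟨s, hsΛ, c, hform⟩ := haff i
  have hcval : c = α - (s : ℝ) * α := by
    have := hform α ⟨hi1, le_of_lt hi2⟩
    rw [hyα] at this; linarith
  refine ⟨s, hsΛ, t i.succ - α, by linarith, fun u hu => ?_⟩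
  have := hform u ⟨le_trans hi1 (le_of_lt hu.1), by have := hu.2; linarith⟩
  rw [this, hcval]

lemma left_normal {r : ℝ} {Λ : Subgroup PosReal} {A : AddSubgroup ℝ} {α β : ℝ}
    (h0 : 0 ≤ α) (hαβ : α < β) (hβr : β ≤ r)
    {y : Equiv.Perm ℝ} (hy : MemFOn r Λ A (Set.Ioo α β) y) :
    ∃ s : PosReal, s ∈ Λ ∧ ∃ ε : ℝ, 0 < ε ∧
      ∀ u ∈ Set.Ioo (β - ε) β, y u = (s : ℝ) * u + (β - (s : ℝ) * β) := by
  obtain ⟨⟨hout, hmono, hcont, n, t, htm, ht0, htl, htA, htfA, haff⟩, hsupp⟩ := hy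
  have hyβ : y β = β := by
    by_contra h
    exact absurd (hsupp h).2 (lt_irrefl β)
  have hβ0 : 0 < β := lt_of_le_of_lt h0 hαβ
  obtain ⟨i, hi1, hi2⟩ := exists_piece_left (γ := β) htm (by rw [ht0]; exact hβ0) (by rw [htl]; exact hβr)
  obtain ⟨s, hsΛ, c, hform⟩ := haff i
  have hcval : c = β - (s : ℝ) * β := by
    have := hform β ⟨le_of_lt hi1, hi2⟩
    rw [hyβ] at this; linarith
  refine ⟨s, hsΛ, β - t i.castSucc, by linarith, fun u hu => ?_⟩
  have := hform u ⟨by have := hu.1; linarith, le_trans (le_of_lt hu.2) hi2⟩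
  rw [this, hcval]

lemma slope_unique_right {y : ℝ → ℝ} {α s₀ c₀ ε₀ : ℝ} (hε₀ : 0 < ε₀)
    (h₀ : ∀ u ∈ Set.Ioo α (α + ε₀), y u = s₀ * u + c₀)
    {s : ℝ} (hs : HasRightSlope y α s) : s = s₀ := by
  obtain ⟨ε, hε, c, hc⟩ := hs
  set δ := min ε₀ ε with hδ
  have hδ0 : 0 < δ := lt_min hε₀ hε
  have key : ∀ u, α < u → u < α + δ → s * u + c = s₀ * u + c₀ := fun u h1 h2 => by
    rw [← hc u ⟨h1, by have := min_le_right ε₀ ε; linarith⟩,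
        h₀ u ⟨h1, by have := min_le_left ε₀ ε; linarith⟩]
  have e1 := key (α + δ/3) (by linarith) (by linarith)
  have e2 := key (α + δ/2) (by linarith) (by linarith)
  exact (affine_coeffs e1 e2 (by intro h; nlinarith)).1

lemma slope_unique_left {y : ℝ → ℝ} {β s₀ c₀ ε₀ : ℝ} (hε₀ : 0 < ε₀)
    (h₀ : ∀ u ∈ Set.Ioo (β - ε₀) β, y u = s₀ * u + c₀)
    {s : ℝ} (hs : HasLeftSlope y β s) : s = s₀ := by
  obtain ⟨ε, hε, c, hc⟩ := hs
  set δ := min ε₀ ε with hδ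
  have hδ0 : 0 < δ := lt_min hε₀ hε
  have key : ∀ u, β - δ < u → u < β → s * u + c = s₀ * u + c₀ := fun u h1 h2 => by
    rw [← hc u ⟨by have := min_le_right ε₀ ε; linarith, h2⟩,
        h₀ u ⟨by have := min_le_left ε₀ ε; linarith, h2⟩]
  have e1 := key (β - δ/3) (by linarith) (by linarith)
  have e2 := key (β - δ/2) (by linarith) (by linarith)
  exact (affine_coeffs e1 e2 (by intro h; nlinarith)).1


lemma inj_right {r : ℝ} {Λ : Subgroup PosReal} {A : AddSubgroup ℝ} {α β : ℝ}
    (h0 : 0 ≤ α) (hαβ : α < β) (hβr : β ≤ r)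
    {x : Equiv.Perm ℝ} (hx : MemFOn r Λ A (Set.Ioo α β) x)
    (hfix : fixSet x ∩ Set.Ioo α β ∩ (A : Set ℝ) = ∅)
    {y z : Equiv.Perm ℝ}
    (hy : MemFOn r Λ A (Set.Ioo α β) y) (hxy : Commute x y)
    (hz : MemFOn r Λ A (Set.Ioo α β) z) (hxz : Commute x z)
    {s : ℝ} (hys : HasRightSlope (⇑y) α s) (hzs : HasRightSlope (⇑z) α s) :
    y = z := by
  have hIoosub : Set.Ioo α β ⊆ Set.Ico 0 r := fun u hu =>
    ⟨le_trans h0 (le_of_lt hu.1), lt_of_lt_of_le hu.2 hβr⟩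
  by_contra hne
  set S : Set ℝ := {u | y u ≠ z u} with hS
  have hSne : S.Nonempty := by
    rcases Set.eq_empty_or_nonempty S with h | h
    · refine absurd (Equiv.ext fun u => ?_) hne
      by_contra hu
      have hmem : u ∈ S := hu
      rw [h] at hmem
      exact Set.notMem_empty u hmem
    · exact h
  have hSsub : S ⊆ Set.Ioo α β := by
    intro u hu
    by_contra h
    exact hu (by rw [fix_outside hy h, fix_outside hz h])
  have bdd : BddBelow S := ⟨α, fun u hu => le_of_lt (hSsub hu).1⟩
  set γ := sInf S with hγ
  -- slope normalization
  obtain ⟨sy, hsyΛ, εy, hεy, hfy⟩ := right_normal h0 hαβ hβr hy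
  obtain ⟨sz, hszΛ, εz, hεz, hfz⟩ := right_normal h0 hαβ hβr hz
  have hsy : s = (sy : ℝ) := slope_unique_right hεy hfy hys
  have hsz : s = (sz : ℝ) := slope_unique_right hεz hfz hzs
  have hyz0 : ∀ u ∈ Set.Ioo α (α + min εy εz), y u = z u := by
    intro u hu
    rw [hfy u ⟨hu.1, lt_of_lt_of_le hu.2 (by have := min_le_left εy εz; linarith)⟩,
        hfz u ⟨hu.1, lt_of_lt_of_le hu.2 (by have := min_le_right εy εz; linarith)⟩,
        ← hsy, ← hsz]
  have hγ_ge : α + min εy εz ≤ γ := by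
    refine le_csInf hSne fun u hu => ?_
    by_contra h
    push_neg at h
    exact hu (hyz0 u ⟨(hSsub hu).1, h⟩)
  have hγα : α < γ := lt_of_lt_of_le (by have := lt_min hεy hεz; linarith) hγ_ge
  have hγβ : γ < β := by
    obtain ⟨u, hu⟩ := hSne
    exact lt_of_le_of_lt (csInf_le bdd hu) (hSsub hu).2
  have hγIco : γ ∈ Set.Ico 0 r := ⟨le_trans h0 (le_of_lt hγα), lt_of_lt_of_le hγβ hβr⟩
  -- the commuting elements preserve S
  have comm_pt : ∀ w : Equiv.Perm ℝ, Commute w y → Commute w z → ∀ u ∈ S, w u ∈ S := by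
    intro w hwy hwz u hu
    have h1 : (w * y) u = (y * w) u := by rw [hwy.eq]
    have h2 : (w * z) u = (z * w) u := by rw [hwz.eq]
    simp only [Equiv.Perm.mul_apply] at h1 h2
    show y (w u) ≠ z (w u)
    intro h
    exact hu (w.injective (h1.trans (h.trans h2.symm)))
  obtain ⟨⟨hxout, hxmono, hxcont, _⟩, hxsupp⟩ := hx
  -- x fixes γ
  have hxγle : x γ ≤ γ := by
    refine le_csInf hSne fun u hu => ?_
    have hinv : x⁻¹ u ∈ S := comm_pt x⁻¹ hxy.inv_left hxz.inv_left u hu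
    have hγle : γ ≤ x⁻¹ u := csInf_le bdd hinv
    calc x γ ≤ x (x⁻¹ u) :=
          hxmono.monotoneOn hγIco (hIoosub (hSsub hinv)) hγle
      _ = u := x.apply_symm_apply u
  have hγlex : γ ≤ x γ := by
    by_contra h
    push_neg at h
    have hc : ContinuousWithinAt x (Set.Ico 0 r) γ := hxcont γ hγIco
    have hev : (⇑x) ⁻¹' (Set.Iio γ) ∈ nhdsWithin γ (Set.Ico 0 r) := hc (Iio_mem_nhds h)
    rw [Metric.mem_nhdsWithin_iff] at hev
    obtain ⟨δ, hδ, hball⟩ := hev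
    obtain ⟨u, huS, hu⟩ := exists_lt_of_csInf_lt hSne (show sInf S < γ + δ by
      rw [← hγ]; linarith)
    have hγu : γ ≤ u := csInf_le bdd huS
    have humem : u ∈ Metric.ball γ δ ∩ Set.Ico 0 r := by
      constructor
      · rw [Metric.mem_ball, Real.dist_eq, abs_of_nonneg (by linarith)]
        linarith
      · exact hIoosub (hSsub huS)
    have hxu : x u < γ := hball humem
    have hxu' : γ ≤ x u := csInf_le bdd (comm_pt x hxy hxz u huS)
    linarith
  have hxγ : x γ = γ := le_antisymm hxγle hγlex
  -- γ ∈ A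
  have hγA : γ ∈ A := by
    obtain ⟨_, _, _, n₁, t₁, ht₁m, ht₁0, ht₁l, ht₁A, _, haff₁⟩ := hy.1
    obtain ⟨_, _, _, n₂, t₂, ht₂m, ht₂0, ht₂l, ht₂A, _, haff₂⟩ := hz.1
    obtain ⟨i₁, hi₁1, hi₁2⟩ := exists_piece_right (γ := γ) ht₁m
      (by rw [ht₁0]; exact hγIco.1) (by rw [ht₁l]; exact hγIco.2)
    obtain ⟨i₂, hi₂1, hi₂2⟩ := exists_piece_right (γ := γ) ht₂m
      (by rw [ht₂0]; exact hγIco.1) (by rw [ht₂l]; exact hγIco.2)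
    rcases eq_or_lt_of_le hi₁1 with h | h₁
    · exact h ▸ ht₁A _
    rcases eq_or_lt_of_le hi₂1 with h | h₂
    · exact h ▸ ht₂A _
    exfalso
    obtain ⟨s₁, _, c₁, hf₁⟩ := haff₁ i₁
    obtain ⟨s₂, _, c₂, hf₂⟩ := haff₂ i₂
    set a := max (t₁ i₁.castSucc) (t₂ i₂.castSucc) with ha
    have haγ : a < γ := max_lt h₁ h₂
    have heval : ∀ u, a < u → u < γ → (s₁ : ℝ) * u + c₁ = (s₂ : ℝ) * u + c₂ := by
      intro u h1 h2
      have hu1 : u ∈ Set.Icc (t₁ i₁.castSucc) (t₁ i₁.succ) :=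
        ⟨le_of_lt (lt_of_le_of_lt (le_max_left _ _) h1),
         le_of_lt (lt_of_lt_of_le h2 (le_of_lt hi₁2))⟩
      have hu2 : u ∈ Set.Icc (t₂ i₂.castSucc) (t₂ i₂.succ) :=
        ⟨le_of_lt (lt_of_le_of_lt (le_max_right _ _) h1),
         le_of_lt (lt_of_lt_of_le h2 (le_of_lt hi₂2))⟩
      have hyzu : y u = z u := by
        by_contra hne'
        exact absurd (csInf_le bdd hne') (not_le.2 h2)
      rw [← hf₁ u hu1, hyzu, hf₂ u hu2]
    have e1 := heval ((2*a+γ)/3) (by linarith) (by linarith)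
    have e2 := heval ((a+2*γ)/3) (by linarith) (by linarith)
    obtain ⟨hseq, hceq⟩ := affine_coeffs e1 e2 (by intro hh; nlinarith)
    set b := min (t₁ i₁.succ) (t₂ i₂.succ) with hb
    have hγb : γ < b := lt_min hi₁2 hi₂2
    have hbγ : b ≤ γ := by
      refine le_csInf hSne fun u hu => ?_
      by_contra hub
      push_neg at hub
      have hγu : γ ≤ u := csInf_le bdd hu
      have hu1 : u ∈ Set.Icc (t₁ i₁.castSucc) (t₁ i₁.succ) :=
        ⟨le_trans hi₁1 hγu, le_of_lt (lt_of_lt_of_le hub (min_le_left _ _))⟩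
      have hu2 : u ∈ Set.Icc (t₂ i₂.castSucc) (t₂ i₂.succ) :=
        ⟨le_trans hi₂1 hγu, le_of_lt (lt_of_lt_of_le hub (min_le_right _ _))⟩
      exact hu (by rw [hf₁ u hu1, hf₂ u hu2, hseq, hceq])
    linarith
  have hmem : γ ∈ fixSet x ∩ Set.Ioo α β ∩ (A : Set ℝ) := ⟨⟨hxγ, hγα, hγβ⟩, hγA⟩
  rw [hfix] at hmem
  exact Set.notMem_empty γ hmem


lemma inj_left {r : ℝ} {Λ : Subgroup PosReal} {A : AddSubgroup ℝ} {α β : ℝ}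
    (h0 : 0 ≤ α) (hαβ : α < β) (hβr : β ≤ r)
    {x : Equiv.Perm ℝ} (hx : MemFOn r Λ A (Set.Ioo α β) x)
    (hfix : fixSet x ∩ Set.Ioo α β ∩ (A : Set ℝ) = ∅)
    {y z : Equiv.Perm ℝ}
    (hy : MemFOn r Λ A (Set.Ioo α β) y) (hxy : Commute x y)
    (hz : MemFOn r Λ A (Set.Ioo α β) z) (hxz : Commute x z)
    {s : ℝ} (hys : HasLeftSlope (⇑y) β s) (hzs : HasLeftSlope (⇑z) β s) :
    y = z := by
  have hIoosub : Set.Ioo α β ⊆ Set.Ico 0 r := fun u hu =>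
    ⟨le_trans h0 (le_of_lt hu.1), lt_of_lt_of_le hu.2 hβr⟩
  by_contra hne
  set S : Set ℝ := {u | y u ≠ z u} with hS
  have hSne : S.Nonempty := by
    rcases Set.eq_empty_or_nonempty S with h | h
    · refine absurd (Equiv.ext fun u => ?_) hne
      by_contra hu
      have hmem : u ∈ S := hu
      rw [h] at hmem
      exact Set.notMem_empty u hmem
    · exact h
  have hSsub : S ⊆ Set.Ioo α β := by
    intro u hu
    by_contra h
    exact hu (by rw [fix_outside hy h, fix_outside hz h])
  have bdd : BddAbove S := ⟨β, fun u hu => le_of_lt (hSsub hu).2⟩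
  set γ := sSup S with hγ
  -- slope normalization
  obtain ⟨sy, hsyΛ, εy, hεy, hfy⟩ := left_normal h0 hαβ hβr hy
  obtain ⟨sz, hszΛ, εz, hεz, hfz⟩ := left_normal h0 hαβ hβr hz
  have hsy : s = (sy : ℝ) := slope_unique_left hεy hfy hys
  have hsz : s = (sz : ℝ) := slope_unique_left hεz hfz hzs
  have hyz0 : ∀ u ∈ Set.Ioo (β - min εy εz) β, y u = z u := by
    intro u hu
    rw [hfy u ⟨lt_of_le_of_lt (by have := min_le_left εy εz; linarith) hu.1, hu.2⟩,
        hfz u ⟨lt_of_le_of_lt (by have := min_le_right εy εz; linarith) hu.1, hu.2⟩,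
        ← hsy, ← hsz]
  have hγ_le : γ ≤ β - min εy εz := by
    refine csSup_le hSne fun u hu => ?_
    by_contra h
    push_neg at h
    exact hu (hyz0 u ⟨h, (hSsub hu).2⟩)
  have hγβ : γ < β := lt_of_le_of_lt hγ_le (by have := lt_min hεy hεz; linarith)
  have hγα : α < γ := by
    obtain ⟨u, hu⟩ := hSne
    exact lt_of_lt_of_le (hSsub hu).1 (le_csSup bdd hu)
  have hγIco : γ ∈ Set.Ico 0 r := ⟨le_trans h0 (le_of_lt hγα), lt_of_lt_of_le hγβ hβr⟩
  -- the commuting elements preserve S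
  have comm_pt : ∀ w : Equiv.Perm ℝ, Commute w y → Commute w z → ∀ u ∈ S, w u ∈ S := by
    intro w hwy hwz u hu
    have h1 : (w * y) u = (y * w) u := by rw [hwy.eq]
    have h2 : (w * z) u = (z * w) u := by rw [hwz.eq]
    simp only [Equiv.Perm.mul_apply] at h1 h2
    show y (w u) ≠ z (w u)
    intro h
    exact hu (w.injective (h1.trans (h.trans h2.symm)))
  obtain ⟨⟨hxout, hxmono, hxcont, _⟩, hxsupp⟩ := hx
  -- x fixes γ
  have hxγge : γ ≤ x γ := by
    refine csSup_le hSne fun u hu => ?_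
    have hinv : x⁻¹ u ∈ S := comm_pt x⁻¹ hxy.inv_left hxz.inv_left u hu
    have hγle : x⁻¹ u ≤ γ := le_csSup bdd hinv
    calc u = x (x⁻¹ u) := (x.apply_symm_apply u).symm
      _ ≤ x γ := hxmono.monotoneOn (hIoosub (hSsub hinv)) hγIco hγle
  have hγgex : x γ ≤ γ := by
    by_contra h
    push_neg at h
    have hc : ContinuousWithinAt x (Set.Ico 0 r) γ := hxcont γ hγIco
    have hev : (⇑x) ⁻¹' (Set.Ioi γ) ∈ nhdsWithin γ (Set.Ico 0 r) := hc (Ioi_mem_nhds h)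
    rw [Metric.mem_nhdsWithin_iff] at hev
    obtain ⟨δ, hδ, hball⟩ := hev
    obtain ⟨u, huS, hu⟩ := exists_lt_of_lt_csSup hSne (show γ - δ < sSup S by
      rw [← hγ]; linarith)
    have hγu : u ≤ γ := le_csSup bdd huS
    have humem : u ∈ Metric.ball γ δ ∩ Set.Ico 0 r := by
      constructor
      · rw [Metric.mem_ball, Real.dist_eq, abs_of_nonpos (by linarith)]
        linarith
      · exact hIoosub (hSsub huS)
    have hxu : γ < x u := hball humem
    have hxu' : x u ≤ γ := le_csSup bdd (comm_pt x hxy hxz u huS)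
    linarith
  have hxγ : x γ = γ := le_antisymm hγgex hxγge
  -- γ ∈ A
  have hγA : γ ∈ A := by
    obtain ⟨_, _, _, n₁, t₁, ht₁m, ht₁0, ht₁l, ht₁A, _, haff₁⟩ := hy.1
    obtain ⟨_, _, _, n₂, t₂, ht₂m, ht₂0, ht₂l, ht₂A, _, haff₂⟩ := hz.1
    obtain ⟨i₁, hi₁1, hi₁2⟩ := exists_piece_left (γ := γ) ht₁m
      (by rw [ht₁0]; linarith) (by rw [ht₁l]; linarith)
    obtain ⟨i₂, hi₂1, hi₂2⟩ := exists_piece_left (γ := γ) ht₂m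
      (by rw [ht₂0]; linarith) (by rw [ht₂l]; linarith)
    rcases eq_or_lt_of_le hi₁2 with h | h₁
    · exact h.symm ▸ ht₁A _
    rcases eq_or_lt_of_le hi₂2 with h | h₂
    · exact h.symm ▸ ht₂A _
    exfalso
    obtain ⟨s₁, _, c₁, hf₁⟩ := haff₁ i₁
    obtain ⟨s₂, _, c₂, hf₂⟩ := haff₂ i₂
    set b := min (t₁ i₁.succ) (t₂ i₂.succ) with hb
    have hγb : γ < b := lt_min h₁ h₂
    have heval : ∀ u, γ < u → u < b → (s₁ : ℝ) * u + c₁ = (s₂ : ℝ) * u + c₂ := by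
      intro u h1 h2
      have hu1 : u ∈ Set.Icc (t₁ i₁.castSucc) (t₁ i₁.succ) :=
        ⟨le_of_lt (lt_trans hi₁1 h1), le_of_lt (lt_of_lt_of_le h2 (min_le_left _ _))⟩
      have hu2 : u ∈ Set.Icc (t₂ i₂.castSucc) (t₂ i₂.succ) :=
        ⟨le_of_lt (lt_trans hi₂1 h1), le_of_lt (lt_of_lt_of_le h2 (min_le_right _ _))⟩
      have hyzu : y u = z u := by
        by_contra hne'
        exact absurd (le_csSup bdd hne') (not_le.2 h1)
      rw [← hf₁ u hu1, hyzu, hf₂ u hu2]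
    have e1 := heval ((2*γ+b)/3) (by linarith) (by linarith)
    have e2 := heval ((γ+2*b)/3) (by linarith) (by linarith)
    obtain ⟨hseq, hceq⟩ := affine_coeffs e1 e2 (by intro hh; nlinarith)
    set a := max (t₁ i₁.castSucc) (t₂ i₂.castSucc) with ha
    have haγ : a < γ := max_lt hi₁1 hi₂1
    have hγa : γ ≤ a := by
      refine csSup_le hSne fun u hu => ?_
      by_contra hua
      push_neg at hua
      have hγu : u ≤ γ := le_csSup bdd hu
      have hu1 : u ∈ Set.Icc (t₁ i₁.castSucc) (t₁ i₁.succ) :=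
        ⟨le_of_lt (lt_of_le_of_lt (le_max_left _ _) hua), le_trans hγu (le_of_lt h₁)⟩
      have hu2 : u ∈ Set.Icc (t₂ i₂.castSucc) (t₂ i₂.succ) :=
        ⟨le_of_lt (lt_of_le_of_lt (le_max_right _ _) hua), le_trans hγu (le_of_lt h₂)⟩
      exact hu (by rw [hf₁ u hu1, hf₂ u hu2, hseq, hceq])
    linarith
  have hmem : γ ∈ fixSet x ∩ Set.Ioo α β ∩ (A : Set ℝ) := ⟨⟨hxγ, hγα, hγβ⟩, hγA⟩
  rw [hfix] at hmem
  exact Set.notMem_empty γ hmem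


/-- Let `α, β ∈ [0, r] ∩ A` with `α < β`, `I = (α, β)`, and let
`x ∈ F_I(r, Λ, A)` satisfy `fix(x) ∩ I ∩ A = ∅`.  Then the map `φ : F_I(r,Λ,A) → Λ`
sending `y` to its right slope at `α` is a group homomorphism whose restriction to the
centralizer of `x` in `F_I(r,Λ,A)` is injective; and the same holds for the map sending
`y` to its left slope at `β`.  (Stated relationally: every element of `F_I` has a right
slope at `α` lying in `Λ`, slopes are multiplicative under composition, and two elements
of the centralizer with the same right slope at `α` are equal; likewise for left slopes
at `β`.) -/
theorem rightSlope_hom_injOn_centralizer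
    (r : ℝ) (hr : 0 < r) (Λ : Subgroup PosReal) (hΛ : Λ ≠ ⊥)
    (A : AddSubgroup ℝ) (hrA : r ∈ A)
    (hΛA : ∀ s : PosReal, s ∈ Λ → ∀ a : ℝ, a ∈ A → (s : ℝ) * a ∈ A)
    (α β : ℝ) (hα : α ∈ Set.Icc (0 : ℝ) r) (hαA : α ∈ A)
    (hβ : β ∈ Set.Icc (0 : ℝ) r) (hβA : β ∈ A) (hαβ : α < β)
    (x : Equiv.Perm ℝ) (hx : MemFOn r Λ A (Set.Ioo α β) x)
    (hfix : fixSet x ∩ Set.Ioo α β ∩ (A : Set ℝ) = ∅) :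
    -- the right slope at `α`: well defined with values in `Λ`
    (∀ y : Equiv.Perm ℝ, MemFOn r Λ A (Set.Ioo α β) y →
      ∃ s : PosReal, s ∈ Λ ∧ HasRightSlope (⇑y) α (s : ℝ)) ∧
    -- multiplicativity (homomorphism property)
    (∀ y z : Equiv.Perm ℝ, MemFOn r Λ A (Set.Ioo α β) y → MemFOn r Λ A (Set.Ioo α β) z →
      ∀ s t : ℝ, HasRightSlope (⇑y) α s → HasRightSlope (⇑z) α t →
        HasRightSlope (⇑(y * z)) α (s * t)) ∧
    -- injectivity on the centralizer of `x`
    (∀ y z : Equiv.Perm ℝ,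
      MemFOn r Λ A (Set.Ioo α β) y → Commute x y →
      MemFOn r Λ A (Set.Ioo α β) z → Commute x z →
      ∀ s : ℝ, HasRightSlope (⇑y) α s → HasRightSlope (⇑z) α s → y = z) ∧
    -- the same three statements for the left slope at `β`
    (∀ y : Equiv.Perm ℝ, MemFOn r Λ A (Set.Ioo α β) y →
      ∃ s : PosReal, s ∈ Λ ∧ HasLeftSlope (⇑y) β (s : ℝ)) ∧
    (∀ y z : Equiv.Perm ℝ, MemFOn r Λ A (Set.Ioo α β) y → MemFOn r Λ A (Set.Ioo α β) z →
      ∀ s t : ℝ, HasLeftSlope (⇑y) β s → HasLeftSlope (⇑z) β t →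
        HasLeftSlope (⇑(y * z)) β (s * t)) ∧
    (∀ y z : Equiv.Perm ℝ,
      MemFOn r Λ A (Set.Ioo α β) y → Commute x y →
      MemFOn r Λ A (Set.Ioo α β) z → Commute x z →
      ∀ s : ℝ, HasLeftSlope (⇑y) β s → HasLeftSlope (⇑z) β s → y = z) := by
  have h0 : (0:ℝ) ≤ α := hα.1
  have hβr : β ≤ r := hβ.2
  refine ⟨?_, ?_, ?_, ?_, ?_, ?_⟩
  · -- right slope exists
    intro y hy
    obtain ⟨s, hsΛ, ε, hε, hf⟩ := right_normal h0 hαβ hβr hy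
    exact ⟨s, hsΛ, ε, hε, α - (s:ℝ) * α, hf⟩
  · -- right multiplicativity
    intro y z hy hz s t hys hzt
    obtain ⟨sy, _, εy, hεy, hfy⟩ := right_normal h0 hαβ hβr hy
    obtain ⟨sz, _, εz, hεz, hfz⟩ := right_normal h0 hαβ hβr hz
    have hsy : s = (sy:ℝ) := slope_unique_right hεy hfy hys
    have hst : t = (sz:ℝ) := slope_unique_right hεz hfz hzt
    have ht0 : 0 < t := by rw [hst]; exact sz.2
    refine ⟨min εz (εy / t), lt_min hεz (div_pos hεy ht0), α - s * t * α, fun u hu => ?_⟩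
    have hzu : z u = t * u + (α - t * α) := by
      rw [hfz u ⟨hu.1, lt_of_lt_of_le hu.2 (by have := min_le_left εz (εy/t); linarith)⟩, ← hst]
    have h1 : α < z u := by rw [hzu]; nlinarith [hu.1]
    have h3 : u - α < εy / t := by
      have := min_le_right εz (εy/t)
      have := hu.2
      linarith
    have h4 : t * (u - α) < εy := by
      have := (mul_lt_mul_iff_right₀ ht0).2 h3
      rwa [mul_div_cancel₀ _ (ne_of_gt ht0)] at this
    have h2 : z u < α + εy := by rw [hzu]; linarith [h4]
    have : (y * z) u = y (z u) := Equiv.Perm.mul_apply y z u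
    rw [this, hfy (z u) ⟨h1, h2⟩, ← hsy, hzu]
    ring
  · -- right injectivity on centralizer
    intro y z hy hxy hz hxz s hys hzs
    exact inj_right h0 hαβ hβr hx hfix hy hxy hz hxz hys hzs
  · -- left slope exists
    intro y hy
    obtain ⟨s, hsΛ, ε, hε, hf⟩ := left_normal h0 hαβ hβr hy
    exact ⟨s, hsΛ, ε, hε, β - (s:ℝ) * β, hf⟩
  · -- left multiplicativity
    intro y z hy hz s t hys hzt
    obtain ⟨sy, _, εy, hεy, hfy⟩ := left_normal h0 hαβ hβr hy
    obtain ⟨sz, _, εz, hεz, hfz⟩ := left_normal h0 hαβ hβr hz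
    have hsy : s = (sy:ℝ) := slope_unique_left hεy hfy hys
    have hst : t = (sz:ℝ) := slope_unique_left hεz hfz hzt
    have ht0 : 0 < t := by rw [hst]; exact sz.2
    refine ⟨min εz (εy / t), lt_min hεz (div_pos hεy ht0), β - s * t * β, fun u hu => ?_⟩
    have hzu : z u = t * u + (β - t * β) := by
      rw [hfz u ⟨lt_of_le_of_lt (by have := min_le_left εz (εy/t); linarith) hu.1, hu.2⟩, ← hst]
    have h1 : z u < β := by rw [hzu]; nlinarith [hu.2]
    have h3 : β - u < εy / t := by
      have := min_le_right εz (εy/t)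
      have := hu.1
      linarith
    have h4 : t * (β - u) < εy := by
      have := (mul_lt_mul_iff_right₀ ht0).2 h3
      rwa [mul_div_cancel₀ _ (ne_of_gt ht0)] at this
    have h2 : β - εy < z u := by rw [hzu]; linarith [h4]
    have : (y * z) u = y (z u) := Equiv.Perm.mul_apply y z u
    rw [this, hfy (z u) ⟨h2, h1⟩, ← hsy, hzu]
    ring
  · -- left injectivity on centralizer
    intro y z hy hxy hz hxz s hys hzs
    exact inj_left h0 hαβ hβr hx hfix hy hxy hz hxz hys hzs


end ThompsonStein
end
end

section
/- Let α, β ∈ [0, r] ∩ A with α < β, and let p, q ∈ Λ with p > 1 > q. Then there exists x ∈ F(r,Λ,A) such that x(t) ≥ t for all t ∈ [0, r), supp(x) = (α, β), the right slope of x at α equals p, and the left slope of x at β equals q. -/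
open Set

noncomputable section

namespace ThompsonStein

private lemma posreal_coe_pow (q : PosReal) (n : ℕ) : ((q^n : PosReal) : ℝ) = (q:ℝ)^n := by
  induction n with
  | zero => rfl
  | succ k ih => rw [pow_succ, pow_succ, ← ih]; rfl

/-- Let `α, β ∈ [0, r] ∩ A` with `α < β`, and let `p, q ∈ Λ` with
`p > 1 > q`.  Then there exists `x ∈ F(r, Λ, A)` with `x t ≥ t` for all `t ∈ [0, r)`,
`supp x = (α, β)`, right slope `p` at `α`, and left slope `q` at `β`. -/
theorem exists_bump_with_prescribed_slopes
    (r : ℝ) (hr : 0 < r) (Λ : Subgroup PosReal) (hΛ : Λ ≠ ⊥)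
    (A : AddSubgroup ℝ) (hrA : r ∈ A)
    (hΛA : ∀ s : PosReal, s ∈ Λ → ∀ a : ℝ, a ∈ A → (s : ℝ) * a ∈ A)
    (α β : ℝ) (hα : α ∈ Set.Icc (0 : ℝ) r) (hαA : α ∈ A)
    (hβ : β ∈ Set.Icc (0 : ℝ) r) (hβA : β ∈ A) (hαβ : α < β)
    (p q : PosReal) (hp : p ∈ Λ) (hq : q ∈ Λ)
    (hp1 : (1 : ℝ) < (p : ℝ)) (hq1 : (q : ℝ) < 1) :
    ∃ x : Equiv.Perm ℝ, MemF r Λ A x ∧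
      (∀ t ∈ Set.Ico (0 : ℝ) r, t ≤ x t) ∧
      supp x = Set.Ioo α β ∧
      HasRightSlope (⇑x) α (p : ℝ) ∧
      HasLeftSlope (⇑x) β (q : ℝ) := by
  have hq0 : (0:ℝ) < q := q.2
  have hp0 : (0:ℝ) < p := p.2
  have hpq : (0:ℝ) < (p:ℝ) - q := by linarith
  have hβα : (0:ℝ) < β - α := sub_pos.mpr hαβ
  obtain ⟨n, hn⟩ : ∃ n : ℕ, (q:ℝ)^n < ((p:ℝ) - q)⁻¹ := exists_pow_lt_of_lt_one (by positivity) hq1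
  have h1' : (q:ℝ)^n * ((p:ℝ) - q) < 1 := by
    have := mul_lt_mul_of_pos_right hn hpq
    rwa [inv_mul_cancel₀ hpq.ne'] at this
  set m : ℝ := (q:ℝ)^n * (β - α) with hm_def
  have hm0 : 0 < m := mul_pos (pow_pos hq0 n) hβα
  have hm_small : ((p:ℝ) - q) * m < β - α := by
    have h2' := mul_lt_mul_of_pos_right h1' hβα
    rw [one_mul] at h2'
    calc ((p:ℝ) - q) * m = (q:ℝ)^n * ((p:ℝ)-q) * (β-α) := by rw [hm_def]; ring
    _ < β - α := h2'
  set e : ℝ := (1 - (q:ℝ)) * m with he_def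
  set d : ℝ := ((p:ℝ) - 1) * m with hd_def
  have he0 : 0 < e := mul_pos (by linarith) hm0
  have hd0 : 0 < d := mul_pos (by linarith) hm0
  have hed : e + d = ((p:ℝ) - q) * m := by rw [he_def, hd_def]; ring
  have hsum : α + e < β - d := by linarith [hm_small, hed]
  set E : ℝ := ((p:ℝ) - 1) * e with hE_def
  have hEd : E = (1 - (q:ℝ)) * d := by rw [hE_def, he_def, hd_def]; ring
  have hE0 : 0 < E := mul_pos (by linarith) he0
  -- the bump function
  set f : ℝ → ℝ := fun u =>
    max u (min ((p:ℝ)*u + (α - (p:ℝ)*α)) (min (u + E) ((q:ℝ)*u + (β - (q:ℝ)*β)))) with hf_def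
  -- region lemmas
  have h1 : ∀ u : ℝ, u ≤ α → f u = u := by
    intro u hu
    exact max_eq_left ((min_le_left _ _).trans (by linarith [mul_nonneg (by linarith : (0:ℝ) ≤ (p:ℝ)-1) (by linarith : (0:ℝ) ≤ α-u)]))
  have h5 : ∀ u : ℝ, β ≤ u → f u = u := by
    intro u hu
    exact max_eq_left (((min_le_right _ _).trans (min_le_right _ _)).trans (by linarith [mul_nonneg (by linarith : (0:ℝ) ≤ 1-(q:ℝ)) (by linarith : (0:ℝ) ≤ u-β)]))
  have h2 : ∀ u : ℝ, α ≤ u → u ≤ α + e → f u = (p:ℝ)*u + (α - (p:ℝ)*α) := by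
    intro u hu1 hu2
    have hub : u ≤ β - d := hu2.trans hsum.le
    have h12 : (p:ℝ)*u + (α - (p:ℝ)*α) ≤ u + E := by
      linarith [mul_nonneg (by linarith : (0:ℝ) ≤ (p:ℝ)-1) (by linarith : (0:ℝ) ≤ α+e-u), hE_def]
    have h23 : u + E ≤ (q:ℝ)*u + (β - (q:ℝ)*β) := by
      linarith [mul_nonneg (by linarith : (0:ℝ) ≤ 1-(q:ℝ)) (by linarith : (0:ℝ) ≤ β-d-u), hEd]
    show max u _ = _
    rw [min_eq_left (le_min h12 (h12.trans h23))]
    exact max_eq_right (by linarith [mul_nonneg (by linarith : (0:ℝ) ≤ (p:ℝ)-1) (by linarith : (0:ℝ) ≤ u-α)])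
  have h3 : ∀ u : ℝ, α + e ≤ u → u ≤ β - d → f u = u + E := by
    intro u hu1 hu2
    have h21 : u + E ≤ (p:ℝ)*u + (α - (p:ℝ)*α) := by
      linarith [mul_nonneg (by linarith : (0:ℝ) ≤ (p:ℝ)-1) (by linarith : (0:ℝ) ≤ u-(α+e)), hE_def]
    have h23 : u + E ≤ (q:ℝ)*u + (β - (q:ℝ)*β) := by
      linarith [mul_nonneg (by linarith : (0:ℝ) ≤ 1-(q:ℝ)) (by linarith : (0:ℝ) ≤ β-d-u), hEd]
    show max u _ = _
    rw [min_eq_left h23, min_eq_right h21]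
    exact max_eq_right (by linarith)
  have h4 : ∀ u : ℝ, β - d ≤ u → u ≤ β → f u = (q:ℝ)*u + (β - (q:ℝ)*β) := by
    intro u hu1 hu2
    have hlb : α + e ≤ u := hsum.le.trans hu1
    have h32 : (q:ℝ)*u + (β - (q:ℝ)*β) ≤ u + E := by
      linarith [mul_nonneg (by linarith : (0:ℝ) ≤ 1-(q:ℝ)) (by linarith : (0:ℝ) ≤ u-(β-d)), hEd]
    have h21 : u + E ≤ (p:ℝ)*u + (α - (p:ℝ)*α) := by
      linarith [mul_nonneg (by linarith : (0:ℝ) ≤ (p:ℝ)-1) (by linarith : (0:ℝ) ≤ u-(α+e)), hE_def]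
    show max u _ = _
    rw [min_eq_right h32, min_eq_right (h32.trans h21)]
    exact max_eq_right (by linarith [mul_nonneg (by linarith : (0:ℝ) ≤ 1-(q:ℝ)) (by linarith : (0:ℝ) ≤ β-u)])
  have hge : ∀ u : ℝ, u ≤ f u := fun u => le_max_left _ _
  -- strict monotonicity, continuity
  have hmono : StrictMono f := by
    intro a b hab
    have m1 : (p:ℝ)*a + (α - (p:ℝ)*α) < (p:ℝ)*b + (α - (p:ℝ)*α) := by linarith [mul_lt_mul_of_pos_left hab hp0]
    have m2 : a + E < b + E := by linarith
    have m3 : (q:ℝ)*a + (β - (q:ℝ)*β) < (q:ℝ)*b + (β - (q:ℝ)*β) := by linarith [mul_lt_mul_of_pos_left hab hq0]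
    exact max_lt_max hab (min_lt_min m1 (min_lt_min m2 m3))
  have hcont : Continuous f := by rw [hf_def]; fun_prop
  have hsurj : Function.Surjective f := by
    intro y
    rcases le_or_gt y α with hy | hy
    · exact ⟨y, h1 y hy⟩
    rcases le_or_gt β y with hy' | hy'
    · exact ⟨y, h5 y hy'⟩
    have hmem : y ∈ Set.Icc (f α) (f β) := by
      rw [h1 α le_rfl, h5 β le_rfl]; exact ⟨hy.le, hy'.le⟩
    obtain ⟨u, _, hu⟩ := intermediate_value_Icc hαβ.le hcont.continuousOn hmem
    exact ⟨u, hu⟩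
  set x : Equiv.Perm ℝ := Equiv.ofBijective f ⟨hmono.injective, hsurj⟩ with hx_def
  have hxc : ∀ u : ℝ, x u = f u := fun u => rfl
  -- membership facts in A
  have hLA : β - α ∈ A := A.sub_mem hβA hαA
  have hmA : m ∈ A := by
    have := hΛA (q^n) (pow_mem hq n) (β - α) hLA
    rwa [posreal_coe_pow q n] at this
  have hqmA : (q:ℝ)*m ∈ A := hΛA q hq m hmA
  have hpmA : (p:ℝ)*m ∈ A := hΛA p hp m hmA
  have heA : e ∈ A := by
    have := A.sub_mem hmA hqmA
    have heq : e = m - (q:ℝ)*m := by rw [he_def]; ring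
    rwa [heq]
  have hdA : d ∈ A := by
    have := A.sub_mem hpmA hmA
    have heq : d = (p:ℝ)*m - m := by rw [hd_def]; ring
    rwa [heq]
  have hαeA : α + e ∈ A := A.add_mem hαA heA
  have hβdA : β - d ∈ A := A.sub_mem hβA hdA
  have hfαe : f (α + e) = α + (p:ℝ)*e := by rw [h2 (α+e) (by linarith) le_rfl]; ring
  have hfβd : f (β - d) = β - (q:ℝ)*d := by rw [h4 (β-d) le_rfl (by linarith)]; ring
  have hfαeA : f (α + e) ∈ A := by rw [hfαe]; exact A.add_mem hαA (hΛA p hp e heA)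
  have hfβdA : f (β - d) ∈ A := by rw [hfβd]; exact A.sub_mem hβA (hΛA q hq d hdA)
  have h0α : (0:ℝ) ≤ α := hα.1
  have hβr : β ≤ r := hβ.2
  refine ⟨x, ⟨?_, ?_, ?_, ?_⟩, ?_, ?_, ?_, ?_⟩
  · -- fixes outside
    intro t ht
    rw [Set.mem_Ico, not_and_or, not_le, not_lt] at ht
    rcases ht with ht | ht
    · exact h1 t (by linarith)
    · exact h5 t (by linarith)
  · exact hmono.strictMonoOn _
  · exact hcont.continuousOn
  · -- the partition
    rcases eq_or_lt_of_le h0α with h0 | h0 <;> rcases eq_or_lt_of_le hβr with hbr | hbr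
    · -- α = 0, β = r
      refine ⟨3, ![0, α + e, β - d, β], ?_, rfl, ?_, ?_, ?_, ?_⟩
      · apply Fin.strictMono_iff_lt_succ.mpr
        intro i
        fin_cases i
        · exact (show (0:ℝ) < α + e by linarith)
        · exact (show α + e < β - d from hsum)
        · exact (show β - d < β by linarith)
      · show β = r; exact hbr
      · intro i; fin_cases i
        · exact A.zero_mem
        · exact hαeA
        · exact hβdA
        · exact hβA
      · intro i; fin_cases i
        · show f 0 ∈ A; rw [h1 0 h0α]; exact A.zero_mem
        · exact hfαeA
        · exact hfβdA
        · show f β ∈ A; rw [h5 β le_rfl]; exact hβA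
      · intro i; fin_cases i
        · exact ⟨p, hp, α - (p:ℝ)*α, fun u hu => h2 u (by rw [← h0]; exact hu.1) hu.2⟩
        · exact ⟨1, one_mem Λ, E, fun u hu => by rw [hxc u, h3 u hu.1 hu.2]; show u + E = (1:ℝ)*u + E; ring⟩
        · exact ⟨q, hq, β - (q:ℝ)*β, fun u hu => h4 u hu.1 hu.2⟩
    · -- α = 0, β < r
      refine ⟨4, ![0, α + e, β - d, β, r], ?_, rfl, rfl, ?_, ?_, ?_⟩
      · apply Fin.strictMono_iff_lt_succ.mpr
        intro i
        fin_cases i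
        · exact (show (0:ℝ) < α + e by linarith)
        · exact (show α + e < β - d from hsum)
        · exact (show β - d < β by linarith)
        · exact (show β < r from hbr)
      · intro i; fin_cases i
        · exact A.zero_mem
        · exact hαeA
        · exact hβdA
        · exact hβA
        · exact hrA
      · intro i; fin_cases i
        · show f 0 ∈ A; rw [h1 0 h0α]; exact A.zero_mem
        · exact hfαeA
        · exact hfβdA
        · show f β ∈ A; rw [h5 β le_rfl]; exact hβA
        · show f r ∈ A; rw [h5 r hβr]; exact hrA
      · intro i; fin_cases i
        · exact ⟨p, hp, α - (p:ℝ)*α, fun u hu => h2 u (by rw [← h0]; exact hu.1) hu.2⟩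
        · exact ⟨1, one_mem Λ, E, fun u hu => by rw [hxc u, h3 u hu.1 hu.2]; show u + E = (1:ℝ)*u + E; ring⟩
        · exact ⟨q, hq, β - (q:ℝ)*β, fun u hu => h4 u hu.1 hu.2⟩
        · exact ⟨1, one_mem Λ, 0, fun u hu => by rw [hxc u, h5 u hu.1]; show u = (1:ℝ)*u + 0; ring⟩
    · -- 0 < α, β = r
      refine ⟨4, ![0, α, α + e, β - d, β], ?_, rfl, ?_, ?_, ?_, ?_⟩
      · apply Fin.strictMono_iff_lt_succ.mpr
        intro i
        fin_cases i
        · exact (show (0:ℝ) < α from h0)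
        · exact (show α < α + e by linarith)
        · exact (show α + e < β - d from hsum)
        · exact (show β - d < β by linarith)
      · show β = r; exact hbr
      · intro i; fin_cases i
        · exact A.zero_mem
        · exact hαA
        · exact hαeA
        · exact hβdA
        · exact hβA
      · intro i; fin_cases i
        · show f 0 ∈ A; rw [h1 0 h0α]; exact A.zero_mem
        · show f α ∈ A; rw [h1 α le_rfl]; exact hαA
        · exact hfαeA
        · exact hfβdA
        · show f β ∈ A; rw [h5 β le_rfl]; exact hβA
      · intro i; fin_cases i
        · exact ⟨1, one_mem Λ, 0, fun u hu => by rw [hxc u, h1 u hu.2]; show u = (1:ℝ)*u + 0; ring⟩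
        · exact ⟨p, hp, α - (p:ℝ)*α, fun u hu => h2 u hu.1 hu.2⟩
        · exact ⟨1, one_mem Λ, E, fun u hu => by rw [hxc u, h3 u hu.1 hu.2]; show u + E = (1:ℝ)*u + E; ring⟩
        · exact ⟨q, hq, β - (q:ℝ)*β, fun u hu => h4 u hu.1 hu.2⟩
    · -- 0 < α, β < r
      refine ⟨5, ![0, α, α + e, β - d, β, r], ?_, rfl, rfl, ?_, ?_, ?_⟩
      · apply Fin.strictMono_iff_lt_succ.mpr
        intro i
        fin_cases i
        · exact (show (0:ℝ) < α from h0)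
        · exact (show α < α + e by linarith)
        · exact (show α + e < β - d from hsum)
        · exact (show β - d < β by linarith)
        · exact (show β < r from hbr)
      · intro i; fin_cases i
        · exact A.zero_mem
        · exact hαA
        · exact hαeA
        · exact hβdA
        · exact hβA
        · exact hrA
      · intro i; fin_cases i
        · show f 0 ∈ A; rw [h1 0 h0α]; exact A.zero_mem
        · show f α ∈ A; rw [h1 α le_rfl]; exact hαA
        · exact hfαeA
        · exact hfβdA
        · show f β ∈ A; rw [h5 β le_rfl]; exact hβA
        · show f r ∈ A; rw [h5 r hβr]; exact hrA
      · intro i; fin_cases i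
        · exact ⟨1, one_mem Λ, 0, fun u hu => by rw [hxc u, h1 u hu.2]; show u = (1:ℝ)*u + 0; ring⟩
        · exact ⟨p, hp, α - (p:ℝ)*α, fun u hu => h2 u hu.1 hu.2⟩
        · exact ⟨1, one_mem Λ, E, fun u hu => by rw [hxc u, h3 u hu.1 hu.2]; show u + E = (1:ℝ)*u + E; ring⟩
        · exact ⟨q, hq, β - (q:ℝ)*β, fun u hu => h4 u hu.1 hu.2⟩
        · exact ⟨1, one_mem Λ, 0, fun u hu => by rw [hxc u, h5 u hu.1]; show u = (1:ℝ)*u + 0; ring⟩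
  · -- t ≤ x t
    intro t _; exact hge t
  · -- support
    ext t
    simp only [supp, Set.mem_setOf_eq, Set.mem_Ioo, hxc]
    constructor
    · intro hne
      by_contra hcon
      rw [not_and_or, not_lt, not_lt] at hcon
      rcases hcon with hc | hc
      · exact hne (h1 t hc)
      · exact hne (h5 t hc)
    · rintro ⟨ht1, ht2⟩
      rcases le_or_gt t (α + e) with hc | hc
      · rw [h2 t ht1.le hc]; intro habs; have := mul_pos (by linarith : (0:ℝ) < (p:ℝ)-1) (by linarith : (0:ℝ) < t-α); linarith
      rcases le_or_gt t (β - d) with hc2 | hc2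
      · rw [h3 t hc.le hc2]; intro habs; linarith
      · rw [h4 t hc2.le ht2.le]; intro habs; have := mul_pos (by linarith : (0:ℝ) < 1-(q:ℝ)) (by linarith : (0:ℝ) < β-t); linarith
  · -- right slope
    exact ⟨e, he0, α - (p:ℝ)*α, fun u hu => h2 u hu.1.le hu.2.le⟩
  · -- left slope
    exact ⟨d, hd0, β - (q:ℝ)*β, fun u hu => h4 u hu.1.le hu.2.le⟩

end ThompsonStein
end
end

section
/- Let r > 0 and let f be a bijection of [0, r) onto itself that is right-continuous at every point of [0, r) and has only finitely many points of discontinuity. Then f is strictly increasing on each of its (finitely many) maximal intervals of continuity; in particular, if J ⊆ [0, r) is an interval such that f is continuous at every point of J, then f is strictly increasing on J. -/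
open Set Filter Topology

/-- A continuous injective function on `Ico a b` is strictly monotone or strictly antitone. -/
lemma aux_monoOrAnti {f : ℝ → ℝ} {a b : ℝ} (hab : a < b)
    (hc : ContinuousOn f (Ico a b)) (hi : InjOn f (Ico a b)) :
    StrictMonoOn f (Ico a b) ∨ StrictAntiOn f (Ico a b) := by
  set m := (a + b) / 2 with hm
  have ham : a < m := by simp only [hm]; linarith
  have hmb : m < b := by simp only [hm]; linarith
  have key : ∀ x y, x ∈ Ico a b → y ∈ Ico a b → x < y →
      (f a < f m → f x < f y) ∧ (f m < f a → f y < f x) := by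
    intro x y hx hy hxy
    set t := max y m with ht
    have htb : t < b := max_lt hy.2 hmb
    have hat : a ≤ t := ham.le.trans (le_max_right _ _)
    have hsub : Icc a t ⊆ Ico a b := fun z hz => ⟨hz.1, lt_of_le_of_lt hz.2 htb⟩
    have hxT : x ∈ Icc a t := ⟨hx.1, hxy.le.trans (le_max_left _ _)⟩
    have hyT : y ∈ Icc a t := ⟨hy.1, le_max_left _ _⟩
    have haT : a ∈ Icc a t := ⟨le_rfl, hat⟩
    have hmT : m ∈ Icc a t := ⟨ham.le, le_max_right _ _⟩
    rcases ContinuousOn.strictMonoOn_of_injOn_Icc' hat (hc.mono hsub) (hi.mono hsub) with h | h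
    · exact ⟨fun _ => h hxT hyT hxy, fun hma => ((lt_asymm hma (h haT hmT ham)).elim)⟩
    · exact ⟨fun hma => ((lt_asymm hma (h haT hmT ham)).elim), fun _ => h hxT hyT hxy⟩
  have hne : f a ≠ f m := fun h => (ne_of_lt ham) (hi ⟨le_rfl, hab⟩ ⟨ham.le, hmb⟩ h)
  rcases hne.lt_or_gt with h | h
  · exact Or.inl fun x hx y hy hxy => (key x y hx hy hxy).1 h
  · exact Or.inr fun x hx y hy hxy => (key x y hx hy hxy).2 h

/-- Image of a continuous strictly antitone function on `Ico a b` (with values in `[0,r)`)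
is `Ioc (sInf image) (f a)`. -/
lemma aux_antiImage {f : ℝ → ℝ} {a b r : ℝ} (hab : a < b)
    (hsub : Ico a b ⊆ Ico 0 r) (hmaps : MapsTo f (Ico 0 r) (Ico 0 r))
    (hc : ContinuousOn f (Ico a b)) (ha : StrictAntiOn f (Ico a b)) :
    f '' Ico a b = Ioc (sInf (f '' Ico a b)) (f a) := by
  have haI : a ∈ Ico a b := ⟨le_rfl, hab⟩
  have hne : (f '' Ico a b).Nonempty := ⟨f a, mem_image_of_mem f haI⟩
  have hbdd : BddBelow (f '' Ico a b) := by
    refine ⟨0, fun y hy => ?_⟩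
    obtain ⟨x, hx, rfl⟩ := hy
    exact (hmaps (hsub hx)).1
  apply Subset.antisymm
  · rintro y ⟨x, hx, rfl⟩
    constructor
    · rcases eq_or_lt_of_le (csInf_le hbdd (mem_image_of_mem f hx)) with h | h
      · exfalso
        set x' := (x + b) / 2 with hx'
        have hxx' : x < x' := by simp only [hx']; linarith [hx.2]
        have hx'I : x' ∈ Ico a b := ⟨hx.1.trans hxx'.le, by simp only [hx']; linarith [hx.2]⟩
        have h1 : f x' < f x := ha hx hx'I hxx'
        have h2 : sInf (f '' Ico a b) ≤ f x' := csInf_le hbdd (mem_image_of_mem f hx'I)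
        rw [h] at h2; linarith
      · exact h
    · rcases eq_or_lt_of_le hx.1 with h | h
      · rw [← h]
      · exact (ha haI hx h).le
  · rintro y ⟨hLy, hyfa⟩
    obtain ⟨z, hz, hzy⟩ := exists_lt_of_csInf_lt hne hLy
    obtain ⟨x₁, hx₁, rfl⟩ := hz
    have hIcc : Icc a x₁ ⊆ Ico a b := fun z hz => ⟨hz.1, lt_of_le_of_lt hz.2 hx₁.2⟩
    have := intermediate_value_Icc' hx₁.1 (hc.mono hIcc) (⟨hzy.le, hyfa⟩ : y ∈ Icc (f x₁) (f a))
    exact image_mono (f := f) hIcc this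

/-- Next discontinuity (or `r`) strictly to the right of `v`. -/
lemma aux_nextDisc {f : ℝ → ℝ} {r : ℝ}
    (hfin : {x ∈ Ico 0 r | ¬ ContinuousWithinAt f (Ico 0 r) x}.Finite)
    {v : ℝ} (hvr : v < r) :
    ∃ b, v < b ∧ b ≤ r ∧
      (b = r ∨ b ∈ {x ∈ Ico 0 r | ¬ ContinuousWithinAt f (Ico 0 r) x}) ∧
      ∀ y ∈ Ioo v b, y ∈ Ico 0 r → ContinuousWithinAt f (Ico 0 r) y := by
  classical
  set s := hfin.toFinset.filter (fun x => v < x) with hs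
  by_cases hsne : s.Nonempty
  · have hmem := Finset.mem_filter.1 (s.min'_mem hsne)
    have hmemD := (Set.Finite.mem_toFinset hfin).1 hmem.1
    refine ⟨s.min' hsne, hmem.2, hmemD.1.2.le, Or.inr hmemD, ?_⟩
    intro y hy hyI
    by_contra hcont
    have hyD : y ∈ s := Finset.mem_filter.2 ⟨(Set.Finite.mem_toFinset hfin).2 ⟨hyI, hcont⟩, hy.1⟩
    exact absurd (s.min'_le y hyD) (not_le.2 hy.2)
  · refine ⟨r, hvr, le_rfl, Or.inl rfl, ?_⟩
    intro y hy hyI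
    by_contra hcont
    exact hsne ⟨y, Finset.mem_filter.2 ⟨(Set.Finite.mem_toFinset hfin).2 ⟨hyI, hcont⟩, hy.1⟩⟩

/-- On a maximal right piece, a strictly antitone continuous function tends to the
infimum of its image at the right endpoint. -/
lemma aux_tendsto {f : ℝ → ℝ} {a b L : ℝ} (hab : a < b)
    (ha : StrictAntiOn f (Ico a b)) (himg : f '' Ico a b = Ioc L (f a)) :
    Tendsto f (𝓝[<] b) (𝓝 L) := by
  have hfa : L < f a := by
    have : f a ∈ Ioc L (f a) := himg ▸ mem_image_of_mem f ⟨le_rfl, hab⟩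
    exact this.1
  refine tendsto_order.2 ⟨fun c hc => ?_, fun c hc => ?_⟩
  · filter_upwards [Ioo_mem_nhdsLT_of_mem (⟨hab, le_rfl⟩ : b ∈ Ioc a b)] with x hx
    have : f x ∈ Ioc L (f a) := himg ▸ mem_image_of_mem f ⟨hx.1.le, hx.2⟩
    exact lt_trans hc this.1
  · set y := (L + min c (f a)) / 2 with hy
    have h1 : L < min c (f a) := lt_min hc hfa
    have hLy : L < y := by simp only [hy]; linarith
    have hyc : y < c := by
      have h2 : min c (f a) ≤ c := min_le_left _ _
      simp only [hy]; linarith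
    have hyfa : y ≤ f a := by
      have h2 : min c (f a) ≤ f a := min_le_right _ _
      simp only [hy]; linarith
    have : y ∈ f '' Ico a b := himg ▸ (⟨hLy, hyfa⟩ : y ∈ Ioc L (f a))
    obtain ⟨x₁, hx₁, hfx₁⟩ := this
    filter_upwards [Ioo_mem_nhdsLT_of_mem (⟨hx₁.2, le_rfl⟩ : b ∈ Ioc x₁ b)] with x hx
    have : f x < f x₁ := ha hx₁ ⟨hx₁.1.trans hx.1.le, hx.2⟩ hx.1
    rw [hfx₁] at this
    linarith

/-- Master lemma: there is no decreasing pair inside a continuity interval. -/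
lemma aux_master {r : ℝ} {f : ℝ → ℝ}
    (hf : Set.BijOn f (Set.Ico 0 r) (Set.Ico 0 r))
    (hrc : ∀ x ∈ Set.Ico 0 r, ContinuousWithinAt f (Set.Ico x r) x)
    (hfin : {x ∈ Set.Ico 0 r | ¬ ContinuousWithinAt f (Set.Ico 0 r) x}.Finite)
    {u v : ℝ} (hu : u ∈ Ico 0 r) (hv : v ∈ Ico 0 r) (huv : u < v)
    (hcont : ∀ x ∈ Icc u v, ContinuousWithinAt f (Ico 0 r) x)
    (hlt : f v < f u) : False := by
  classical
  set S : Set ℝ := {L | ∃ a b, a < b ∧ Ico a b ⊆ Ico 0 r ∧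
      (b = r ∨ b ∈ {x ∈ Ico 0 r | ¬ ContinuousWithinAt f (Ico 0 r) x}) ∧
      ContinuousOn f (Ico a b) ∧ StrictAntiOn f (Ico a b) ∧
      f '' Ico a b = Ioc L (f a)} with hS
  -- building a continuity piece to the right of x₀, given continuity on (x₀, w]
  have piece : ∀ x₀ w, x₀ ∈ Ico 0 r → x₀ ≤ w → w < r →
      (∀ x ∈ Ioc x₀ w, ContinuousWithinAt f (Ico 0 r) x) →
      ∃ b, w < b ∧ b ≤ r ∧
        (b = r ∨ b ∈ {x ∈ Ico 0 r | ¬ ContinuousWithinAt f (Ico 0 r) x}) ∧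
        Ico x₀ b ⊆ Ico 0 r ∧ ContinuousOn f (Ico x₀ b) := by
    intro x₀ w hx₀ hx₀w hwr hpre
    obtain ⟨b, hwb, hbr, hbD, hIoo⟩ := aux_nextDisc hfin hwr
    have hsub : Ico x₀ b ⊆ Ico 0 r := fun z hz => ⟨hx₀.1.trans hz.1, lt_of_lt_of_le hz.2 hbr⟩
    have hsub' : Ico x₀ b ⊆ Ico x₀ r := fun z hz => ⟨hz.1, lt_of_lt_of_le hz.2 hbr⟩
    refine ⟨b, hwb, hbr, hbD, hsub, ?_⟩
    intro x hx
    rcases eq_or_lt_of_le hx.1 with h | h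
    · rw [← h]
      exact (hrc x₀ hx₀).mono hsub'
    · rcases le_or_gt x w with h' | h'
      · exact (hpre x ⟨h, h'⟩).mono hsub
      · exact (hIoo x ⟨h', hx.2⟩ (hsub hx)).mono hsub
  -- the initial antitone piece, giving S nonempty
  obtain ⟨b, hvb, hbr, hbD, hsub, hc⟩ :=
    piece u v hu huv.le hv.2 (fun x hx => hcont x ⟨hx.1.le, hx.2⟩)
  have hab : u < b := huv.trans hvb
  have hanti : StrictAntiOn f (Ico u b) := by
    rcases aux_monoOrAnti hab hc (hf.injOn.mono hsub) with h | h
    · exact absurd (h ⟨le_rfl, hab⟩ ⟨huv.le, hvb⟩ huv) (not_lt.2 hlt.le)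
    · exact h
  have himg := aux_antiImage hab hsub hf.mapsTo hc hanti
  have hSne : sInf (f '' Ico u b) ∈ S := by
    rw [hS]; exact ⟨u, b, hab, hsub, hbD, hc, hanti, himg⟩
  -- S is finite
  have hSfin : S.Finite := by
    refine ((hfin.insert r).image (fun b => limUnder (𝓝[<] b) f)).subset ?_
    intro L hL
    rw [hS] at hL
    obtain ⟨a, b', hab', hsub', hbD', hc', hanti', himg'⟩ := hL
    refine ⟨b', ?_, (aux_tendsto hab' hanti' himg').limUnder_eq⟩
    rcases hbD' with h | h
    · exact mem_insert_iff.2 (Or.inl h)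
    · exact mem_insert_iff.2 (Or.inr h)
  -- minimal element
  have hSne' : S.Nonempty := ⟨_, hSne⟩
  have hL₀S : sInf S ∈ S := hSne'.csInf_mem hSfin
  set L₀ := sInf S with hL₀
  have hmin : ∀ L ∈ S, L₀ ≤ L := fun L hL => csInf_le hSfin.bddBelow hL
  rw [hS] at hL₀S
  obtain ⟨a, b2, hab2, hsub2, hbD2, hc2, hanti2, himg2⟩ := hL₀S
  have haI : a ∈ Ico a b2 := ⟨le_rfl, hab2⟩
  have hfaIoc : f a ∈ Ioc L₀ (f a) := himg2 ▸ mem_image_of_mem f haI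
  have hL₀fa : L₀ < f a := hfaIoc.1
  have hfaIco : f a ∈ Ico 0 r := hf.mapsTo (hsub2 haI)
  have hL₀0 : 0 ≤ L₀ := by
    by_contra h
    push_neg at h
    have hy : L₀ / 2 ∈ Ioc L₀ (f a) := ⟨by linarith, by linarith [hfaIco.1]⟩
    rw [← himg2] at hy
    obtain ⟨x, hx, hfx⟩ := hy
    have := (hf.mapsTo (hsub2 hx)).1
    rw [hfx] at this
    linarith
  have hL₀r : L₀ < r := lt_trans hL₀fa hfaIco.2
  obtain ⟨x₀, hx₀, hfx₀⟩ := hf.surjOn ⟨hL₀0, hL₀r⟩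
  have hx₀ab : x₀ ∉ Ico a b2 := by
    intro h
    have : f x₀ ∈ Ioc L₀ (f a) := himg2 ▸ mem_image_of_mem f h
    rw [hfx₀] at this
    exact lt_irrefl _ this.1
  obtain ⟨b₀, hxb₀, hb₀r, hb₀D, hsub₀, hc₀⟩ :=
    piece x₀ x₀ hx₀ le_rfl hx₀.2 (fun x hx => absurd hx.2 (not_le.2 hx.1))
  set m := (x₀ + b₀) / 2 with hmdef
  have hx₀m : x₀ < m := by simp only [hmdef]; linarith
  have hmb₀ : m < b₀ := by simp only [hmdef]; linarith
  have hm : m ∈ Ico x₀ b₀ := ⟨hx₀m.le, hmb₀⟩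
  rcases aux_monoOrAnti hxb₀ hc₀ (hf.injOn.mono hsub₀) with hM | hA
  · -- increasing case
    have hfm : L₀ < f m := by
      have := hM ⟨le_rfl, hxb₀⟩ hm hx₀m
      rw [hfx₀] at this
      exact this
    set y := (L₀ + min (f m) (f a)) / 2 with hydef
    have h1 : L₀ < min (f m) (f a) := lt_min hfm hL₀fa
    have hLy : L₀ < y := by simp only [hydef]; linarith
    have hyfm : y < f m := by
      have := min_le_left (f m) (f a); simp only [hydef]; linarith
    have hyfa : y ≤ f a := by
      have := min_le_right (f m) (f a); simp only [hydef]; linarith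
    have hyIoc : y ∈ Ioc L₀ (f a) := ⟨hLy, hyfa⟩
    rw [← himg2] at hyIoc
    obtain ⟨p, hp, hfp⟩ := hyIoc
    have hIccm : Icc x₀ m ⊆ Ico x₀ b₀ := fun z hz => ⟨hz.1, lt_of_le_of_lt hz.2 hmb₀⟩
    have hyIoo : y ∈ Ioo (f x₀) (f m) := ⟨by rw [hfx₀]; exact hLy, hyfm⟩
    obtain ⟨q, hq, hfq⟩ := intermediate_value_Ioo hx₀m.le (hc₀.mono hIccm) hyIoo
    have hqI : q ∈ Ico 0 r :=
      ⟨hx₀.1.trans hq.1.le, lt_of_lt_of_le (hq.2.trans hmb₀) hb₀r⟩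
    have hpq : p = q := hf.injOn (hsub2 hp) hqI (hfp.trans hfq.symm)
    have hcase : x₀ < a ∨ b2 ≤ x₀ := by
      by_contra hnot
      push_neg at hnot
      exact hx₀ab ⟨hnot.1, hnot.2⟩
    rcases hcase with hxa | hbx
    · rcases le_or_gt b₀ a with hba | hab0
      · rw [hpq] at hp
        linarith [hp.1, hq.2]
      · set y' := (L₀ + f a) / 2 with hy'def
        have hy'1 : L₀ < y' := by simp only [hy'def]; linarith
        have hy'2 : y' < f a := by simp only [hy'def]; linarith
        have hy'Ioc : y' ∈ Ioc L₀ (f a) := ⟨hy'1, hy'2.le⟩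
        rw [← himg2] at hy'Ioc
        obtain ⟨p', hp', hfp'⟩ := hy'Ioc
        have hIcca : Icc x₀ a ⊆ Ico x₀ b₀ := fun z hz => ⟨hz.1, lt_of_le_of_lt hz.2 hab0⟩
        have hy'Ioo : y' ∈ Ioo (f x₀) (f a) := ⟨by rw [hfx₀]; exact hy'1, hy'2⟩
        obtain ⟨q', hq', hfq'⟩ := intermediate_value_Ioo hxa.le (hc₀.mono hIcca) hy'Ioo
        have hq'I : q' ∈ Ico 0 r :=
          ⟨hx₀.1.trans hq'.1.le, lt_trans hq'.2 (hsub2 haI).2⟩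
        have : p' = q' := hf.injOn (hsub2 hp') hq'I (hfp'.trans hfq'.symm)
        rw [this] at hp'
        linarith [hp'.1, hq'.2]
    · rw [hpq] at hp
      linarith [hp.2, hq.1]
  · -- decreasing case: contradiction with minimality
    have himg₀ := aux_antiImage hxb₀ hsub₀ hf.mapsTo hc₀ hA
    have hL'S : sInf (f '' Ico x₀ b₀) ∈ S := by
      rw [hS]; exact ⟨x₀, b₀, hxb₀, hsub₀, hb₀D, hc₀, hA, himg₀⟩
    have h1 : f m ∈ Ioc (sInf (f '' Ico x₀ b₀)) (f x₀) := himg₀ ▸ mem_image_of_mem f hm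
    have h2 : f m < f x₀ := hA ⟨le_rfl, hxb₀⟩ hm hx₀m
    have h3 := hmin _ hL'S
    rw [hfx₀] at h2
    linarith [h1.1]

/-- Let `r > 0` and let `f` be a bijection of `[0, r)` onto itself that is
right-continuous at every point of `[0, r)` and has only finitely many points of
discontinuity.  Then `f` is strictly increasing on each of its maximal intervals of
continuity; in particular, if `J ⊆ [0, r)` is an interval such that `f` is continuous at
every point of `J`, then `f` is strictly increasing on `J`. -/
theorem strictMonoOn_of_rightContinuous_bijOn
    (r : ℝ) (hr : 0 < r) (f : ℝ → ℝ)
    (hf : Set.BijOn f (Set.Ico 0 r) (Set.Ico 0 r))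
    (hrc : ∀ x ∈ Set.Ico 0 r, ContinuousWithinAt f (Set.Ico x r) x)
    (hfin : {x ∈ Set.Ico 0 r | ¬ ContinuousWithinAt f (Set.Ico 0 r) x}.Finite)
    (J : Set ℝ) (hJ : J ⊆ Set.Ico 0 r) (hJint : Set.OrdConnected J)
    (hJcont : ∀ x ∈ J, ContinuousWithinAt f (Set.Ico 0 r) x) :
    StrictMonoOn f J := by
  intro x hx y hy hxy
  by_contra h
  push_neg at h
  rcases eq_or_lt_of_le h with heq | hlt
  · exact absurd (hf.injOn (hJ hy) (hJ hx) heq) (ne_of_gt hxy)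
  · exact aux_master hf hrc hfin (hJ hx) (hJ hy) hxy
      (fun z hz => hJcont z (hJint.out hx hy hz)) hlt
end
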